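/- arXiv:2005.01080 — 10 statements merged into one kernel-verified Lean document; each statement's English description precedes it below -/
import Mathlib

section
/- Let n, k, r, s be positive integers with (r−1)k + r ≤ s ≤ rk + r − 1 and n ≥ rk + r − 1, and let H be an r-graph on n vertices with matching number ν(H) ≤ k. Then K_s^r(H) ≤ K_s^r(F^{(r)}_{n,k,r}) = C(rk+r−1, s). -/
open Finset

/-- The number of `s`-cliques of the `r`-uniform hypergraph `H`
(sets of `s` vertices all of whose `r`-element subsets are edges). -/
def cliqueCount {V : Type*} [Fintype V] [DecidableEq V] (r s : ℕ)
    (H : Finset (Finset V)) : ℕ :=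
  ((Finset.univ.powersetCard s).filter (fun S => S.powersetCard r ⊆ H)).card

/-- The hypergraph `F^{(r)}_{n,k,a}` on `Fin n`: all `r`-element subsets having
at least `a` elements among the first `a*k + a - 1` vertices. -/
def Fnka (n k r a : ℕ) : Finset (Finset (Fin n)) :=
  (Finset.univ.powersetCard r).filter
    (fun E => a ≤ (E.filter (fun x : Fin n => (x : ℕ) < a * k + a - 1)).card)

/-- The matching number of `H` is at most `k`. -/
def matchingLE {V : Type*} (H : Finset (Finset V)) (k : ℕ) : Prop :=
  ∀ M ⊆ H, (M : Set (Finset V)).Pairwise Disjoint → M.card ≤ k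

/-- The degree of a vertex set `A`: the number of edges of `H` containing `A`. -/
def degOf {V : Type*} [DecidableEq V] (H : Finset (Finset V)) (A : Finset V) : ℕ :=
  (H.filter (fun E => A ⊆ E)).card

/-- The shifting operator `S_{ij}` applied to a single edge. -/
def shiftEdge {n : ℕ} (H : Finset (Finset (Fin n))) (i j : Fin n)
    (E : Finset (Fin n)) : Finset (Fin n) :=
  if j ∈ E ∧ i ∉ E ∧ insert i (E.erase j) ∉ H then insert i (E.erase j) else E

/-- The shifted hypergraph `S_{ij}(H)`. -/
def shift {n : ℕ} (H : Finset (Finset (Fin n))) (i j : Fin n) :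
    Finset (Finset (Fin n)) :=
  H.image (shiftEdge H i j)

/-- `H` is stable if it is invariant under all shifts `S_{ij}` with `i < j`. -/
def IsStable {n : ℕ} (H : Finset (Finset (Fin n))) : Prop :=
  ∀ i j : Fin n, i < j → shift H i j = H

set_option linter.unusedVariables false


variable {n : ℕ} {H : Finset (Finset (Fin n))} {i j : Fin n}

lemma shiftEdge_card (hij : i ≠ j) (E : Finset (Fin n)) :
    (shiftEdge H i j E).card = E.card := by
  unfold shiftEdge
  split
  · next h =>
    rw [card_insert_of_notMem (fun hi => h.2.1 (mem_of_mem_erase hi)),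
      card_erase_of_mem h.1]
    have : 0 < E.card := card_pos.2 ⟨j, h.1⟩
    omega
  · rfl

lemma mem_shift_cases (hij : i ≠ j) {F : Finset (Fin n)} (hF : F ∈ shift H i j) :
    F ∈ H ∨ (i ∈ F ∧ j ∉ F ∧ F ∉ H ∧ insert j (F.erase i) ∈ H) := by
  rcases mem_image.1 hF with ⟨E, hE, hEF⟩
  unfold shiftEdge at hEF
  split at hEF
  · next h =>
    subst hEF
    right
    refine ⟨mem_insert_self _ _, ?_, h.2.2, ?_⟩
    · simp only [mem_insert]
      rintro (rfl | hj)
      · exact hij rfl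
      · exact (notMem_erase j E) hj
    · have h1 : (insert i (E.erase j)).erase i = E.erase j := by
        rw [erase_insert]
        intro hi; exact h.2.1 (mem_of_mem_erase hi)
      rw [h1, insert_erase h.1]
      exact hE
  · subst hEF; exact Or.inl hE

lemma stable_mem (hst : IsStable H) (hij : i < j) {e : Finset (Fin n)}
    (he : e ∈ H) (hj : j ∈ e) (hi : i ∉ e) : insert i (e.erase j) ∈ H := by
  by_contra hcon
  have : shiftEdge H i j e ∈ shift H i j := mem_image_of_mem _ he
  rw [hst i j hij] at this
  unfold shiftEdge at this
  rw [if_pos ⟨hj, hi, hcon⟩] at this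
  exact hcon this

lemma shift_uniform {r : ℕ} (hij : i ≠ j) (hunif : ∀ E ∈ H, E.card = r) :
    ∀ E ∈ shift H i j, E.card = r := by
  intro F hF
  rcases mem_image.1 hF with ⟨E, hE, hEF⟩
  rw [← hEF, shiftEdge_card hij]
  exact hunif E hE

lemma shift_matchingLE {k : ℕ} (hij : i ≠ j) (hm : matchingLE H k) :
    matchingLE (shift H i j) k := by
  intro M hM hdisj
  -- every element of M is in H, or is a unique "moved" edge containing i
  by_cases hall : ∀ F ∈ M, F ∈ H
  · exact hm M hall hdisj
  push_neg at hall
  obtain ⟨F₀, hF₀M, hF₀H⟩ := hall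
  rcases mem_shift_cases hij (hM hF₀M) with h | ⟨hiF₀, hjF₀, _, he₀⟩
  · exact absurd h hF₀H
  set e₀ : Finset (Fin n) := insert j (F₀.erase i) with he₀def
  -- all other elements of M are in H and don't contain i
  have hother : ∀ F ∈ M, F ≠ F₀ → F ∈ H ∧ i ∉ F := by
    intro F hFM hne
    have hdisj0 : Disjoint F F₀ := hdisj hFM hF₀M hne
    have hiF : i ∉ F := fun hi => (disjoint_left.1 hdisj0) hi hiF₀
    rcases mem_shift_cases hij (hM hFM) with h | ⟨hi', _, _, _⟩
    · exact ⟨h, hiF⟩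
    · exact absurd hi' hiF
  by_cases hj : ∃ F₁ ∈ M, j ∈ F₁
  · -- swap both F₀ and F₁
    obtain ⟨F₁, hF₁M, hjF₁⟩ := hj
    have hne10 : F₁ ≠ F₀ := fun h => hjF₀ (h ▸ hjF₁)
    obtain ⟨hF₁H, hiF₁⟩ := hother F₁ hF₁M hne10
    -- g = F₁ with j replaced by i, is in H
    set g : Finset (Fin n) := insert i (F₁.erase j) with hgdef
    have hgH : g ∈ H := by
      by_contra hgH
      rcases mem_image.1 (hM hF₁M) with ⟨E, hE, hEF⟩
      unfold shiftEdge at hEF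
      split at hEF
      · next h =>
        exact hiF₁ (hEF ▸ mem_insert_self i _)
      · next h =>
        subst hEF
        push_neg at h
        exact hgH (h hjF₁ hiF₁)
    -- replacement matching in H
    set M' : Finset (Finset (Fin n)) :=
      insert e₀ (insert g ((M.erase F₀).erase F₁)) with hM'def
    have hrest : ∀ F, F ∈ (M.erase F₀).erase F₁ → F ∈ M ∧ F ≠ F₀ ∧ F ≠ F₁ := by
      intro F hF
      exact ⟨mem_of_mem_erase (mem_of_mem_erase hF), ne_of_mem_erase (mem_of_mem_erase hF),
        ne_of_mem_erase hF⟩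
    have hrestH : ∀ F, F ∈ (M.erase F₀).erase F₁ → F ∈ H ∧ i ∉ F ∧ j ∉ F := by
      intro F hF
      obtain ⟨hFM, hne0, hne1⟩ := hrest F hF
      obtain ⟨hFH, hiF⟩ := hother F hFM hne0
      refine ⟨hFH, hiF, fun hjF => ?_⟩
      exact (disjoint_left.1 (hdisj hFM hF₁M hne1)) hjF hjF₁
    have hje₀ : j ∈ e₀ := mem_insert_self _ _
    have hie₀ : i ∉ e₀ := by
      simp only [he₀def, mem_insert]
      rintro (rfl | h)
      · exact hij rfl
      · exact notMem_erase i F₀ h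
    have hig : i ∈ g := mem_insert_self _ _
    have hjg : j ∉ g := by
      simp only [hgdef, mem_insert]
      rintro (rfl | h)
      · exact hij rfl
      · exact notMem_erase j F₁ h
    have hde : Disjoint e₀ g := by
      rw [disjoint_left]
      intro a hae hag
      rw [he₀def, mem_insert] at hae
      rw [hgdef, mem_insert] at hag
      rcases hae with rfl | hae
      · rcases hag with rfl | hag
        · exact hij rfl
        · exact notMem_erase _ _ hag
      · rcases hag with rfl | hag
        · exact notMem_erase _ _ hae
        · exact (disjoint_left.1 (hdisj hF₁M hF₀M hne10)) (mem_of_mem_erase hag)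
            (mem_of_mem_erase hae)
    have hsub : e₀ ⊆ insert j F₀ := by
      rw [he₀def]; exact insert_subset_insert _ (erase_subset _ _)
    have hgsub : g ⊆ insert i F₁ := by
      rw [hgdef]; exact insert_subset_insert _ (erase_subset _ _)
    have hM'H : M' ⊆ H := by
      intro F hF
      rw [hM'def, mem_insert, mem_insert] at hF
      rcases hF with rfl | rfl | hF
      · exact he₀
      · exact hgH
      · exact (hrestH F hF).1
    have hd' : (M' : Set (Finset (Fin n))).Pairwise Disjoint := by
      intro a ha b hb hab
      simp only [hM'def, coe_insert, Set.mem_insert_iff, mem_coe] at ha hb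
      have key : ∀ F, F ∈ (M.erase F₀).erase F₁ → Disjoint e₀ F ∧ Disjoint g F := by
        intro F hF
        obtain ⟨hFM, hne0, hne1⟩ := hrest F hF
        obtain ⟨_, hiF, hjF⟩ := hrestH F hF
        constructor
        · refine disjoint_left.2 fun a hae haF => ?_
          rcases mem_insert.1 (hsub hae) with rfl | h
          · exact hjF haF
          · exact (disjoint_left.1 (hdisj hF₀M hFM hne0.symm)) h haF
        · refine disjoint_left.2 fun a hag haF => ?_
          rcases mem_insert.1 (hgsub hag) with rfl | h
          · exact hiF haF
          · exact (disjoint_left.1 (hdisj hF₁M hFM hne1.symm)) h haF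
      rcases ha with rfl | rfl | ha <;> rcases hb with rfl | rfl | hb
      · exact absurd rfl hab
      · exact hde
      · exact (key b hb).1
      · exact hde.symm
      · exact absurd rfl hab
      · exact (key b hb).2
      · exact ((key a ha).1).symm
      · exact ((key a ha).2).symm
      · exact hdisj (hrest a ha).1 (hrest b hb).1 hab
    have hcard : M'.card = M.card := by
      have h1 : g ∉ (M.erase F₀).erase F₁ := fun h => (hrestH g h).2.1 hig
      have h2 : e₀ ∉ insert g ((M.erase F₀).erase F₁) := by
        rw [mem_insert]
        rintro (h | h)
        · exact hjg (h ▸ hje₀)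
        · exact (hrestH e₀ h).2.2 hje₀
      rw [hM'def, card_insert_of_notMem h2, card_insert_of_notMem h1,
        card_erase_of_mem (mem_erase.2 ⟨hne10, hF₁M⟩), card_erase_of_mem hF₀M]
      have : 2 ≤ M.card := by
        refine (one_lt_card).2 ⟨F₀, hF₀M, F₁, hF₁M, fun h => hne10 h.symm⟩
      omega
    calc M.card = M'.card := hcard.symm
      _ ≤ k := hm M' hM'H hd'
  · -- only F₀ is replaced by e₀
    push_neg at hj
    set M' : Finset (Finset (Fin n)) := insert e₀ (M.erase F₀) with hM'def
    have hje₀ : j ∈ e₀ := mem_insert_self _ _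
    have hsub : e₀ ⊆ insert j F₀ := by
      rw [he₀def]; exact insert_subset_insert _ (erase_subset _ _)
    have hM'H : M' ⊆ H := by
      intro F hF
      rcases mem_insert.1 hF with rfl | hF
      · exact he₀
      · exact (hother F (mem_of_mem_erase hF) (ne_of_mem_erase hF)).1
    have hd' : (M' : Set (Finset (Fin n))).Pairwise Disjoint := by
      intro a ha b hb hab
      simp only [hM'def, coe_insert, Set.mem_insert_iff, mem_coe] at ha hb
      have key : ∀ F, F ∈ M.erase F₀ → Disjoint e₀ F := by
        intro F hF
        refine disjoint_left.2 fun a hae haF => ?_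
        rcases mem_insert.1 (hsub hae) with rfl | h
        · exact hj F (mem_of_mem_erase hF) haF
        · exact (disjoint_left.1 (hdisj hF₀M (mem_of_mem_erase hF)
            (ne_of_mem_erase hF).symm)) h haF
      rcases ha with rfl | ha <;> rcases hb with rfl | hb
      · exact absurd rfl hab
      · exact key b hb
      · exact (key a ha).symm
      · exact hdisj (mem_of_mem_erase ha) (mem_of_mem_erase hb) hab
    have hcard : M'.card = M.card := by
      have h2 : e₀ ∉ M.erase F₀ := fun h => hj e₀ (mem_of_mem_erase h) hje₀
      rw [hM'def, card_insert_of_notMem h2, card_erase_of_mem hF₀M]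
      have : 1 ≤ M.card := card_pos.2 ⟨F₀, hF₀M⟩
      omega
    calc M.card = M'.card := hcard.symm
      _ ≤ k := hm M' hM'H hd'

lemma not_mem_shift_move (hij : i ≠ j) {e : Finset (Fin n)} (he : e ∈ H)
    (hne : e ∉ shift H i j) :
    j ∈ e ∧ i ∉ e ∧ insert i (e.erase j) ∉ H := by
  by_contra hcon
  have : shiftEdge H i j e = e := by
    unfold shiftEdge
    rw [if_neg hcon]
  exact hne (this ▸ mem_image_of_mem _ he)

lemma clique_shift_move {r : ℕ} (hij : i ≠ j) {S : Finset (Fin n)}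
    (hS : S.powersetCard r ⊆ H) (hS' : ¬ S.powersetCard r ⊆ shift H i j) :
    j ∈ S ∧ i ∉ S ∧ (insert i (S.erase j)).powersetCard r ⊆ shift H i j := by
  obtain ⟨e, heS, hes⟩ := not_subset.1 hS'
  obtain ⟨heSS, hecard⟩ := mem_powersetCard.1 heS
  obtain ⟨hje, hie, heij⟩ := not_mem_shift_move hij (hS heS) hes
  have hjS : j ∈ S := heSS hje
  have hiS : i ∉ S := by
    intro hiS
    refine heij (hS (mem_powersetCard.2 ⟨?_, ?_⟩))
    · exact insert_subset hiS ((erase_subset _ _).trans heSS)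
    · rw [card_insert_of_notMem (fun h => hie (mem_of_mem_erase h)),
        card_erase_of_mem hje]
      have : 0 < e.card := card_pos.2 ⟨j, hje⟩
      omega
  refine ⟨hjS, hiS, ?_⟩
  intro f hf
  obtain ⟨hfS', hfcard⟩ := mem_powersetCard.1 hf
  have hjS' : j ∉ insert i (S.erase j) := by
    simp only [mem_insert]
    rintro (rfl | h)
    · exact hij rfl
    · exact notMem_erase _ _ h
  have hjf : j ∉ f := fun h => hjS' (hfS' h)
  by_cases hif : i ∈ f
  · -- g = f with i replaced by j is an r-subset of S
    set g : Finset (Fin n) := insert j (f.erase i) with hgdef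
    have hfiS : f.erase i ⊆ S.erase j := by
      intro x hx
      rcases mem_insert.1 (hfS' (mem_of_mem_erase hx)) with rfl | h
      · exact absurd rfl (mem_erase.1 hx).1
      · exact h
    have hgS : g ⊆ S := insert_subset hjS (hfiS.trans (erase_subset _ _))
    have hjfi : j ∉ f.erase i := fun h => hjf (mem_of_mem_erase h)
    have higr : i ∉ g := by
      simp only [hgdef, mem_insert]
      rintro (rfl | h)
      · exact hij rfl
      · exact notMem_erase _ _ h
    have hgcard : g.card = r := by
      rw [hgdef, card_insert_of_notMem hjfi, card_erase_of_mem hif]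
      have : 0 < f.card := card_pos.2 ⟨i, hif⟩
      omega
    have hgH : g ∈ H := hS (mem_powersetCard.2 ⟨hgS, hgcard⟩)
    have hkey : insert i (g.erase j) = f := by
      rw [hgdef, erase_insert hjfi, insert_erase hif]
    by_cases hfH : f ∈ H
    · have : shiftEdge H i j f = f := by
        unfold shiftEdge
        rw [if_neg (by rintro ⟨h, _, _⟩; exact hjf h)]
      exact this ▸ mem_image_of_mem _ hfH
    · have : shiftEdge H i j g = f := by
        unfold shiftEdge
        rw [if_pos ⟨mem_insert_self _ _, higr, hkey ▸ hfH⟩, hkey]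
      exact this ▸ mem_image_of_mem _ hgH
  · -- f is an r-subset of S itself
    have hfS : f ⊆ S := by
      intro x hx
      rcases mem_insert.1 (hfS' hx) with rfl | h
      · exact absurd hx hif
      · exact mem_of_mem_erase h
    have hfH : f ∈ H := hS (mem_powersetCard.2 ⟨hfS, hfcard⟩)
    have : shiftEdge H i j f = f := by
      unfold shiftEdge
      rw [if_neg (by rintro ⟨h, _, _⟩; exact hjf h)]
    exact this ▸ mem_image_of_mem _ hfH

lemma shift_cliqueCount {r s : ℕ} (hij : i ≠ j) :
    cliqueCount r s H ≤ cliqueCount r s (shift H i j) := by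
  classical
  unfold cliqueCount
  set H' := shift H i j with hH'
  refine card_le_card_of_injOn
    (fun S => if S.powersetCard r ⊆ H' then S else insert i (S.erase j)) ?_ ?_
  · intro S hS
    obtain ⟨hS1, hS2⟩ := mem_filter.1 hS
    obtain ⟨_, hScard⟩ := mem_powersetCard.1 hS1
    dsimp only
    by_cases h : S.powersetCard r ⊆ H'
    · rw [if_pos h]
      exact mem_filter.2 ⟨hS1, h⟩
    · rw [if_neg h]
      obtain ⟨hjS, hiS, hclique⟩ := clique_shift_move hij hS2 h
      refine mem_filter.2 ⟨mem_powersetCard.2 ⟨subset_univ _, ?_⟩, hclique⟩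
      rw [card_insert_of_notMem (fun hh => hiS (mem_of_mem_erase hh)),
        card_erase_of_mem hjS]
      have : 0 < S.card := card_pos.2 ⟨j, hjS⟩
      omega
  · intro S₁ hS₁ S₂ hS₂ heq
    simp only [coe_filter, Set.mem_setOf_eq] at hS₁ hS₂
    obtain ⟨_, hc₁⟩ := hS₁
    obtain ⟨_, hc₂⟩ := hS₂
    dsimp only at heq
    by_cases h1 : S₁.powersetCard r ⊆ H' <;> by_cases h2 : S₂.powersetCard r ⊆ H'
    · rwa [if_pos h1, if_pos h2] at heq
    · -- S₁ fixed, S₂ moved : contradiction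
      rw [if_pos h1, if_neg h2] at heq
      obtain ⟨hjS₂, hiS₂, _⟩ := clique_shift_move hij hc₂ h2
      -- the bad r-subset of S₂ shifts into S₁, contradicting S₂ not clique of H'
      exfalso
      obtain ⟨e, heS, hes⟩ := not_subset.1 h2
      obtain ⟨heSS, hecard⟩ := mem_powersetCard.1 heS
      obtain ⟨hje, hie, heij⟩ := not_mem_shift_move hij (hc₂ heS) hes
      refine heij (hc₁ (mem_powersetCard.2 ⟨?_, ?_⟩))
      · rw [heq]
        exact insert_subset_insert _ (fun x hx =>
          mem_erase.2 ⟨(mem_erase.1 hx).1, heSS (mem_of_mem_erase hx)⟩)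
      · rw [card_insert_of_notMem (fun h => hie (mem_of_mem_erase h)),
          card_erase_of_mem hje]
        have : 0 < e.card := card_pos.2 ⟨j, hje⟩
        omega
    · -- symmetric case
      rw [if_neg h1, if_pos h2] at heq
      obtain ⟨hjS₁, hiS₁, _⟩ := clique_shift_move hij hc₁ h1
      exfalso
      obtain ⟨e, heS, hes⟩ := not_subset.1 h1
      obtain ⟨heSS, hecard⟩ := mem_powersetCard.1 heS
      obtain ⟨hje, hie, heij⟩ := not_mem_shift_move hij (hc₁ heS) hes
      refine heij (hc₂ (mem_powersetCard.2 ⟨?_, ?_⟩))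
      · rw [← heq]
        exact insert_subset_insert _ (fun x hx =>
          mem_erase.2 ⟨(mem_erase.1 hx).1, heSS (mem_of_mem_erase hx)⟩)
      · rw [card_insert_of_notMem (fun h => hie (mem_of_mem_erase h)),
          card_erase_of_mem hje]
        have : 0 < e.card := card_pos.2 ⟨j, hje⟩
        omega
    · -- both moved
      rw [if_neg h1, if_neg h2] at heq
      obtain ⟨hjS₁, hiS₁, _⟩ := clique_shift_move hij hc₁ h1
      obtain ⟨hjS₂, hiS₂, _⟩ := clique_shift_move hij hc₂ h2
      have : S₁ = S₂ := by
        have e1 : insert j ((insert i (S₁.erase j)).erase i) = S₁ := by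
          rw [erase_insert (fun h => hiS₁ (mem_of_mem_erase h)), insert_erase hjS₁]
        have e2 : insert j ((insert i (S₂.erase j)).erase i) = S₂ := by
          rw [erase_insert (fun h => hiS₂ (mem_of_mem_erase h)), insert_erase hjS₂]
        rw [← e1, ← e2, heq]
      exact this

def hweight {n : ℕ} (H : Finset (Finset (Fin n))) : ℕ :=
  ∑ E ∈ H, ∑ x ∈ E, (x : ℕ)

lemma shiftEdge_injOn (hij : i ≠ j) : Set.InjOn (shiftEdge H i j) H := by
  intro e₁ he₁ e₂ he₂ heq
  unfold shiftEdge at heq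
  split at heq <;> split at heq
  · next h1 h2 =>
    -- both moved: recover
    have r1 : insert j ((insert i (e₁.erase j)).erase i) = e₁ := by
      rw [erase_insert (fun h => h1.2.1 (mem_of_mem_erase h)), insert_erase h1.1]
    have r2 : insert j ((insert i (e₂.erase j)).erase i) = e₂ := by
      rw [erase_insert (fun h => h2.2.1 (mem_of_mem_erase h)), insert_erase h2.1]
    rw [← r1, ← r2, heq]
  · next h1 h2 => exact absurd (heq ▸ (mem_coe.1 he₂)) h1.2.2
  · next h1 h2 => exact absurd (heq ▸ (mem_coe.1 he₁)) h2.2.2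
  · exact heq

lemma shift_weight_lt (hij : i < j) (hne : shift H i j ≠ H) :
    hweight (shift H i j) < hweight H := by
  classical
  have hijne : i ≠ j := ne_of_lt hij
  have hmoved : ∃ e ∈ H, shiftEdge H i j e ≠ e := by
    by_contra hcon
    push_neg at hcon
    exact hne (by
      unfold shift
      rw [image_congr (fun e he => hcon e he)]
      exact image_id)
  have hle : ∀ e ∈ H, (∑ x ∈ shiftEdge H i j e, (x : ℕ)) ≤ ∑ x ∈ e, (x : ℕ) := by
    intro e he
    unfold shiftEdge
    split
    · next h =>
      have h1 : ∑ x ∈ insert i (e.erase j), (x : ℕ) =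
          (i : ℕ) + ∑ x ∈ e.erase j, (x : ℕ) :=
        sum_insert (fun hh => h.2.1 (mem_of_mem_erase hh))
      have h2 : ∑ x ∈ e.erase j, (x : ℕ) + (j : ℕ) = ∑ x ∈ e, (x : ℕ) :=
        sum_erase_add _ _ h.1
      have := Fin.lt_def.1 hij
      omega
    · exact le_rfl
  have hlt : ∀ e ∈ H, shiftEdge H i j e ≠ e →
      (∑ x ∈ shiftEdge H i j e, (x : ℕ)) < ∑ x ∈ e, (x : ℕ) := by
    intro e he hne'
    unfold shiftEdge at hne' ⊢
    split
    · next h =>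
      have h1 : ∑ x ∈ insert i (e.erase j), (x : ℕ) =
          (i : ℕ) + ∑ x ∈ e.erase j, (x : ℕ) :=
        sum_insert (fun hh => h.2.1 (mem_of_mem_erase hh))
      have h2 : ∑ x ∈ e.erase j, (x : ℕ) + (j : ℕ) = ∑ x ∈ e, (x : ℕ) :=
        sum_erase_add _ _ h.1
      have := Fin.lt_def.1 hij
      omega
    · next h =>
      rw [if_neg h] at hne'
      exact absurd rfl hne' 
  unfold hweight shift
  rw [sum_image (fun a ha b hb => shiftEdge_injOn hijne ha hb)]
  obtain ⟨e₀, he₀, hne₀⟩ := hmoved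
  exact sum_lt_sum hle ⟨e₀, he₀, hlt e₀ he₀ hne₀⟩

lemma exists_stable {k r s : ℕ} :
    ∀ (w : ℕ) (H : Finset (Finset (Fin n))), hweight H ≤ w →
    (∀ E ∈ H, E.card = r) → matchingLE H k →
    ∃ H' : Finset (Finset (Fin n)), IsStable H' ∧ (∀ E ∈ H', E.card = r) ∧
      matchingLE H' k ∧ cliqueCount r s H ≤ cliqueCount r s H' := by
  intro w
  induction w with
  | zero =>
    intro H hw hunif hm
    -- any shift either fixes H or decreases weight below 0: so H is stable
    by_cases hst : IsStable H
    · exact ⟨H, hst, hunif, hm, le_rfl⟩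
    · exfalso
      unfold IsStable at hst
      push_neg at hst
      obtain ⟨a, b, hab, hne⟩ := hst
      have := shift_weight_lt hab hne
      omega
  | succ w ih =>
    intro H hw hunif hm
    by_cases hst : IsStable H
    · exact ⟨H, hst, hunif, hm, le_rfl⟩
    · unfold IsStable at hst
      push_neg at hst
      obtain ⟨a, b, hab, hne⟩ := hst
      have hwlt := shift_weight_lt hab hne
      have habne : a ≠ b := ne_of_lt hab
      obtain ⟨H', h1, h2, h3, h4⟩ := ih (shift H a b) (by omega)
        (shift_uniform habne hunif) (shift_matchingLE habne hm)
      exact ⟨H', h1, h2, h3, le_trans (shift_cliqueCount habne) h4⟩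

lemma blocks_matching {V : Type*} [DecidableEq V] (H : Finset (Finset V)) (r : ℕ) :
    ∀ (q : ℕ) (B D : Finset V), Disjoint B D → B.card = (r - 1) * q → D.card = q →
    (∀ P ⊆ B, P.card = r - 1 → ∀ t ∈ D, insert t P ∈ H) →
    ∃ M ⊆ H, M.card = q ∧ (M : Set (Finset V)).Pairwise Disjoint ∧
      ∀ F ∈ M, F ⊆ B ∪ D := by
  intro q
  induction q with
  | zero =>
    intro B D _ _ _ _
    exact ⟨∅, empty_subset _, card_empty, by simp, by simp⟩
  | succ q ih =>
    intro B D hBD hB hD hE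
    have htD : D.Nonempty := card_pos.1 (by omega)
    obtain ⟨t, ht⟩ := htD
    obtain ⟨P, hPB, hP⟩ := exists_subset_card_eq
      (show r - 1 ≤ B.card by rw [hB]; nlinarith)
    have htP : t ∉ P := fun h => (disjoint_left.1 hBD) (hPB h) ht
    set e : Finset V := insert t P with hedef
    have heH : e ∈ H := hE P hPB hP t ht
    -- recurse
    have hB' : (B \ P).card = (r - 1) * q := by
      rw [card_sdiff_of_subset hPB, hB, hP]
      ring_nf
      omega
    have hD' : (D.erase t).card = q := by
      rw [card_erase_of_mem ht, hD]
      omega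
    have hBD' : Disjoint (B \ P) (D.erase t) :=
      hBD.mono sdiff_subset (erase_subset _ _)
    obtain ⟨M', hM'H, hM'card, hM'disj, hM'sub⟩ := ih (B \ P) (D.erase t) hBD' hB' hD'
      (fun P' hP' hPc t' ht' => hE P' (hP'.trans sdiff_subset) hPc t' (mem_of_mem_erase ht'))
    have hedisj : ∀ F ∈ M', Disjoint e F := by
      intro F hF
      refine disjoint_left.2 fun a hae haF => ?_
      rcases mem_insert.1 hae with rfl | haP
      · rcases mem_union.1 (hM'sub F hF haF) with h | h
        · exact (disjoint_left.1 hBD) (sdiff_subset h) ht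
        · exact (notMem_erase a D) h
      · rcases mem_union.1 (hM'sub F hF haF) with h | h
        · exact (mem_sdiff.1 h).2 haP
        · exact (disjoint_left.1 hBD) (hPB haP) (mem_of_mem_erase h)
    have heM' : e ∉ M' := by
      intro h
      have : t ∈ B \ P ∪ D.erase t := hM'sub e h (mem_insert_self _ _)
      rcases mem_union.1 this with h' | h'
      · exact (disjoint_left.1 hBD) (sdiff_subset h') ht
      · exact (notMem_erase t D) h'
    refine ⟨insert e M', ?_, ?_, ?_, ?_⟩
    · exact insert_subset heH hM'H
    · rw [card_insert_of_notMem heM', hM'card]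
    · intro a ha b hb hab
      simp only [coe_insert, Set.mem_insert_iff, mem_coe] at ha hb
      rcases ha with rfl | ha <;> rcases hb with rfl | hb
      · exact absurd rfl hab
      · exact hedisj b hb
      · exact (hedisj a ha).symm
      · exact hM'disj ha hb hab
    · intro F hF
      rcases mem_insert.1 hF with rfl | hF
      · exact insert_subset (mem_union_right _ ht) (hPB.trans subset_union_left)
      · exact (hM'sub F hF).trans (union_subset_union sdiff_subset (erase_subset _ _))

lemma stable_clique_lt {k r s : ℕ} (hr0 : 0 < r)
    (hs1 : (r - 1) * k + r ≤ s) (hst : IsStable H) (hm : matchingLE H k)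
    {S : Finset (Fin n)} (hSc : S.powersetCard r ⊆ H) (hcard : S.card = s) :
    ∀ v ∈ S, (v : ℕ) < r * k + r - 1 := by
  intro v hv
  by_contra hvm
  push_neg at hvm
  have hexp : (r - 1) * (k + 1) = (r - 1) * k + (r - 1) := by ring
  have hrk : (r - 1) * k + r ≤ s := hs1
  -- blocks from S.erase v
  obtain ⟨B, hBA, hB⟩ := exists_subset_card_eq
    (show (r - 1) * (k + 1) ≤ (S.erase v).card by
      rw [card_erase_of_mem hv, hcard]; omega)
  -- tails from Iic v minus B
  have hCcard : (Finset.Iic v).card = (v : ℕ) + 1 := Fin.card_Iic v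
  have h1 : (r - 1) * (k + 1) + (k + 1) = r * k + r := by
    obtain ⟨a, ha⟩ : ∃ a, r = a + 1 := ⟨r - 1, by omega⟩
    subst ha
    simp only [Nat.add_sub_cancel]
    ring
  obtain ⟨D, hDC, hD⟩ := exists_subset_card_eq
    (show k + 1 ≤ ((Finset.Iic v) \ B).card by
      have h2 : (Finset.Iic v).card ≤ ((Finset.Iic v) \ B).card + B.card :=
        card_le_card_sdiff_add_card
      omega)
  have hBD : Disjoint B D := (disjoint_sdiff).mono_right hDC
  have hE : ∀ P ⊆ B, P.card = r - 1 → ∀ t ∈ D, insert t P ∈ H := by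
    intro P hPB hPc t htD
    have hPS : P ⊆ S.erase v := hPB.trans hBA
    have hvP : v ∉ P := fun h => (notMem_erase v S) (hPS h)
    have he₀ : insert v P ∈ H := by
      refine hSc (mem_powersetCard.2 ⟨insert_subset hv (hPS.trans (erase_subset _ _)), ?_⟩)
      rw [card_insert_of_notMem hvP, hPc]
      omega
    have htv : t ≤ v := mem_Iic.1 (mem_sdiff.1 (hDC htD)).1
    rcases eq_or_lt_of_le htv with rfl | hlt
    · exact he₀
    · have htP : t ∉ insert v P := by
        simp only [mem_insert]
        rintro (rfl | h)
        · exact absurd rfl (ne_of_lt hlt)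
        · exact (disjoint_left.1 hBD) (hPB h) htD
      have := stable_mem hst hlt he₀ (mem_insert_self v P) htP
      rwa [erase_insert hvP] at this
  obtain ⟨M, hMH, hMcard, hMdisj, _⟩ :=
    blocks_matching H r (k + 1) B D hBD (by omega) hD hE
  have := hm M hMH hMdisj
  omega

lemma stable_count {k r s : ℕ} (hr0 : 0 < r)
    (hs1 : (r - 1) * k + r ≤ s) (hnm : r * k + r - 1 ≤ n)
    (hst : IsStable H) (hm : matchingLE H k) :
    cliqueCount r s H ≤ Nat.choose (r * k + r - 1) s := by
  classical
  set m := r * k + r - 1 with hmdef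
  set Bm : Finset (Fin n) := univ.filter (fun x => (x : ℕ) < m) with hBmdef
  have hBmcard : Bm.card = m := by
    have : Bm = (univ : Finset (Fin m)).map (Fin.castLEEmb hnm) := by
      ext x
      simp only [hBmdef, mem_filter, mem_univ, true_and, mem_map]
      constructor
      · intro hx
        exact ⟨⟨(x : ℕ), hx⟩, by ext; simp⟩
      · rintro ⟨y, -, rfl⟩
        simpa using y.isLt
    rw [this, card_map, card_univ, Fintype.card_fin]
  have hsub : (univ.powersetCard s).filter (fun S => S.powersetCard r ⊆ H) ⊆
      Bm.powersetCard s := by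
    intro S hS
    obtain ⟨hS1, hS2⟩ := mem_filter.1 hS
    obtain ⟨_, hScard⟩ := mem_powersetCard.1 hS1
    refine mem_powersetCard.2 ⟨?_, hScard⟩
    intro v hvS
    exact mem_filter.2 ⟨mem_univ _, stable_clique_lt hr0 hs1 hst hm hS2 hScard v hvS⟩
  calc cliqueCount r s H ≤ (Bm.powersetCard s).card := card_le_card hsub
    _ = Nat.choose m s := by rw [card_powersetCard, hBmcard]

lemma fnka_count {k r s : ℕ} (hr0 : 0 < r) (hrs : r ≤ s)
    (hnm : r * k + r - 1 ≤ n) :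
    cliqueCount r s (Fnka n k r r) = Nat.choose (r * k + r - 1) s := by
  classical
  set m := r * k + r - 1 with hmdef
  set Bm : Finset (Fin n) := univ.filter (fun x => (x : ℕ) < m) with hBmdef
  have hBmcard : Bm.card = m := by
    have : Bm = (univ : Finset (Fin m)).map (Fin.castLEEmb hnm) := by
      ext x
      simp only [hBmdef, mem_filter, mem_univ, true_and, mem_map]
      constructor
      · intro hx
        exact ⟨⟨(x : ℕ), hx⟩, by ext; simp⟩
      · rintro ⟨y, -, rfl⟩
        simpa using y.isLt
    rw [this, card_map, card_univ, Fintype.card_fin]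
  have hset : (univ.powersetCard s).filter (fun S => S.powersetCard r ⊆ Fnka n k r r) =
      Bm.powersetCard s := by
    ext S
    simp only [mem_filter, mem_powersetCard, subset_univ, true_and]
    constructor
    · rintro ⟨hScard, hclique⟩
      refine ⟨?_, hScard⟩
      intro v hvS
      by_contra hvm
      simp only [hBmdef, mem_filter, mem_univ, true_and] at hvm
      push_neg at hvm
      obtain ⟨P, hPS, hPcard⟩ := exists_subset_card_eq
        (show r - 1 ≤ (S.erase v).card by rw [card_erase_of_mem hvS, hScard]; omega)
      have hvP : v ∉ P := fun h => (notMem_erase v S) (hPS h)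
      have hecard : (insert v P).card = r := by
        rw [card_insert_of_notMem hvP, hPcard]; omega
      have heF : insert v P ∈ Fnka n k r r := hclique (mem_powersetCard.2
        ⟨insert_subset hvS (hPS.trans (erase_subset _ _)), hecard⟩)
      have := (mem_filter.1 heF).2
      have hle : ((insert v P).filter (fun x : Fin n => (x : ℕ) < r * k + r - 1)).card
          ≤ ((insert v P).erase v).card := by
        apply card_le_card
        intro x hx
        obtain ⟨hx1, hx2⟩ := mem_filter.1 hx
        refine mem_erase.2 ⟨?_, hx1⟩
        rintro rfl
        exact absurd hx2 (by omega)
      rw [erase_insert hvP] at hle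
      omega
    · rintro ⟨hSBm, hScard⟩
      refine ⟨hScard, ?_⟩
      intro E hE
      obtain ⟨hES, hEcard⟩ := mem_powersetCard.1 hE
      refine mem_filter.2 ⟨mem_powersetCard.2 ⟨subset_univ _, hEcard⟩, ?_⟩
      have : E.filter (fun x : Fin n => (x : ℕ) < r * k + r - 1) = E := by
        apply filter_true_of_mem
        intro x hx
        have := mem_filter.1 (hSBm (hES hx))
        exact this.2
      rw [this, hEcard]
  unfold cliqueCount
  rw [hset, card_powersetCard, hBmcard]

section Transfer
variable {V : Type*} [Fintype V] [DecidableEq V] {N : ℕ} (e : V ≃ Fin N)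

lemma map_symm_map (T : Finset (Fin N)) :
    (T.map e.symm.toEmbedding).map e.toEmbedding = T := by
  ext x
  simp [mem_map_equiv]

lemma map_map_symm (S : Finset V) :
    (S.map e.toEmbedding).map e.symm.toEmbedding = S := by
  ext x
  simp [mem_map_equiv]

lemma matchingLE_image_equiv {k : ℕ} {H : Finset (Finset V)} (hm : matchingLE H k) :
    matchingLE (H.image (fun E => E.map e.toEmbedding)) k := by
  intro M hM hdisj
  classical
  set M' := M.image (fun F => F.map e.symm.toEmbedding) with hM'def
  have hM'card : M'.card = M.card :=
    card_image_of_injOn (Finset.map_injective _).injOn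
  rw [← hM'card]
  apply hm M'
  · intro F' hF'
    rw [hM'def] at hF'
    obtain ⟨F, hF, rfl⟩ := mem_image.1 hF'
    obtain ⟨E, hE, rfl⟩ := mem_image.1 (hM hF)
    rwa [map_map_symm]
  · intro a ha b hb hab
    rw [hM'def, coe_image] at ha hb
    obtain ⟨F₁, hF₁, rfl⟩ := ha
    obtain ⟨F₂, hF₂, rfl⟩ := hb
    have hne : F₁ ≠ F₂ := fun h => hab (by rw [h])
    exact (disjoint_map _).2 (hdisj hF₁ hF₂ hne)

lemma cliqueCount_image_equiv (r s : ℕ) (H : Finset (Finset V)) :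
    cliqueCount r s H = cliqueCount r s (H.image (fun E => E.map e.toEmbedding)) := by
  classical
  unfold cliqueCount
  set Hf := H.image (fun E => E.map e.toEmbedding) with hHf
  have hmem : ∀ E : Finset V, E.map e.toEmbedding ∈ Hf ↔ E ∈ H := by
    intro E
    constructor
    · intro h
      obtain ⟨E', hE', heq⟩ := mem_image.1 h
      rwa [← Finset.map_injective e.toEmbedding heq]
    · exact fun h => mem_image_of_mem _ h
  apply card_bij (fun S _ => S.map e.toEmbedding)
  · intro S hS
    obtain ⟨hS1, hS2⟩ := mem_filter.1 hS
    obtain ⟨_, hScard⟩ := mem_powersetCard.1 hS1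
    refine mem_filter.2 ⟨mem_powersetCard.2 ⟨subset_univ _, by rw [card_map, hScard]⟩, ?_⟩
    intro E' hE'
    rw [powersetCard_map] at hE'
    obtain ⟨E, hE, rfl⟩ := mem_map.1 hE'
    have : E ∈ H := hS2 hE
    exact mem_image_of_mem _ this
  · intro S₁ h₁ S₂ h₂ heq
    exact Finset.map_injective _ heq
  · intro T hT
    obtain ⟨hT1, hT2⟩ := mem_filter.1 hT
    obtain ⟨_, hTcard⟩ := mem_powersetCard.1 hT1
    refine ⟨T.map e.symm.toEmbedding, ?_, map_symm_map e T⟩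
    refine mem_filter.2 ⟨mem_powersetCard.2 ⟨subset_univ _, by rw [card_map, hTcard]⟩, ?_⟩
    intro E hE
    obtain ⟨hES, hEcard⟩ := mem_powersetCard.1 hE
    have hmap : E.map e.toEmbedding ∈ T.powersetCard r := by
      refine mem_powersetCard.2 ⟨?_, by rw [card_map, hEcard]⟩
      intro x hx
      obtain ⟨y, hy, rfl⟩ := mem_map.1 hx
      have := hES hy
      obtain ⟨z, hz, rfl⟩ := mem_map.1 this
      simpa using hz
    have := hT2 hmap
    exact (hmem E).1 this
end Transfer


/-- Theorem 1.3 (III), first part. -/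
theorem max_cliques_large_s {V : Type*} [Fintype V] [DecidableEq V] {n k r s : ℕ}
    (hn0 : 0 < n) (hk0 : 0 < k) (hr0 : 0 < r) (hs0 : 0 < s)
    (hs1 : (r - 1) * k + r ≤ s) (hs2 : s ≤ r * k + r - 1)
    (hn : r * k + r - 1 ≤ n)
    (hcard : Fintype.card V = n)
    (H : Finset (Finset V)) (hunif : ∀ E ∈ H, E.card = r)
    (hmatch : matchingLE H k) :
    cliqueCount r s H ≤ cliqueCount r s (Fnka n k r r) ∧
      cliqueCount r s (Fnka n k r r) = Nat.choose (r * k + r - 1) s := by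
  have hrs : r ≤ s := le_trans (Nat.le_add_left r ((r - 1) * k)) hs1
  have e := Fintype.equivFinOfCardEq hcard
  have hunif' : ∀ E ∈ H.image (fun E => E.map e.toEmbedding), E.card = r := by
    intro E hE
    obtain ⟨E', hE', rfl⟩ := mem_image.1 hE
    rw [card_map]
    exact hunif E' hE'
  have hm' := matchingLE_image_equiv e hmatch
  obtain ⟨H', hst, hu', hm'', hle⟩ := exists_stable
    (hweight (H.image (fun E => E.map e.toEmbedding))) _ le_rfl hunif' hm'
  have heq2 : cliqueCount r s (Fnka n k r r) = Nat.choose (r * k + r - 1) s :=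
    fnka_count hr0 hrs hn
  refine ⟨?_, heq2⟩
  calc cliqueCount r s H = cliqueCount r s (H.image (fun E => E.map e.toEmbedding)) :=
        cliqueCount_image_equiv e r s H
    _ ≤ cliqueCount r s H' := hle
    _ ≤ Nat.choose (r * k + r - 1) s := stable_count hr0 hs1 hn hst hm''
    _ = cliqueCount r s (Fnka n k r r) := heq2.symm
end

section
/- Let n, k, r, s be positive integers with (r−1)k + r ≤ s ≤ rk + r − 1 and n ≥ rk + r − 1, and let H be an r-graph on n vertices with matching number ν(H) ≤ k. If K_s^r(H) < C(rk+r−1, s), then in fact K_s^r(H) ≤ C(rk+r−1, s) − C(rk−1, s−r). -/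
open Finset

section Helpers
open Finset

variable {V : Type*} [DecidableEq V]

/-- Partition a set of size `r*n` into `n` disjoint `r`-subsets. -/
lemma partition_lemma {r : ℕ} (hr : 0 < r) :
    ∀ (n : ℕ) (B : Finset V), B.card = r * n →
    ∃ M : Finset (Finset V), M.card = n ∧ (∀ e ∈ M, e ⊆ B ∧ e.card = r) ∧
      (M : Set (Finset V)).Pairwise Disjoint := by
  intro n
  induction n with
  | zero => intro B _; exact ⟨∅, by simp, by simp, by simp⟩
  | succ n ih =>
    intro B hB
    obtain ⟨e, heB, hecard⟩ := Finset.exists_subset_card_eq (s := B) (n := r) (by nlinarith)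
    have hBe : (B \ e).card = r * n := by
      rw [card_sdiff_of_subset heB]; rw [hB, hecard]; ring_nf; omega
    obtain ⟨M', hM'card, hM'sub, hM'pair⟩ := ih (B \ e) hBe
    have heM' : e ∉ M' := by
      intro h
      have := (hM'sub e h).1
      obtain ⟨x, hx⟩ := Finset.card_pos.mp (hecard ▸ hr)
      exact (mem_sdiff.mp (this hx)).2 hx
    refine ⟨insert e M', ?_, ?_, ?_⟩
    · rw [card_insert_of_notMem heM', hM'card]
    · intro f hf
      rcases mem_insert.mp hf with rfl | hf
      · exact ⟨heB, hecard⟩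
      · exact ⟨(hM'sub f hf).1.trans (sdiff_subset), (hM'sub f hf).2⟩
    · intro f hf g hg hfg
      simp only [coe_insert, Set.mem_insert_iff, mem_coe] at hf hg
      rcases hf with rfl | hf
      · rcases hg with rfl | hg
        · exact absurd rfl hfg
        · exact disjoint_left.mpr fun x hx hxg => (mem_sdiff.mp ((hM'sub g hg).1 hxg)).2 hx
      · rcases hg with rfl | hg
        · exact disjoint_left.mpr fun x hx hxg => (mem_sdiff.mp ((hM'sub f hf).1 hx)).2 hxg
        · exact hM'pair hf hg hfg

/-- Combine two matchings with disjoint supports. -/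
lemma combine_matchings {M N : Finset (Finset V)} {X Y : Finset V}
    (hXY : Disjoint X Y)
    (hM : ∀ e ∈ M, e ⊆ X ∧ e.Nonempty) (hN : ∀ e ∈ N, e ⊆ Y ∧ e.Nonempty)
    (hMp : (M : Set (Finset V)).Pairwise Disjoint)
    (hNp : (N : Set (Finset V)).Pairwise Disjoint) :
    (M ∪ N).card = M.card + N.card ∧
    ((M ∪ N : Finset (Finset V)) : Set (Finset V)).Pairwise Disjoint ∧
    (∀ e ∈ M ∪ N, e ⊆ X ∪ Y ∧ e.Nonempty) := by
  have hdisj : Disjoint M N := by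
    rw [disjoint_left]
    intro e heM heN
    obtain ⟨x, hx⟩ := (hM e heM).2
    exact (disjoint_left.mp hXY ((hM e heM).1 hx)) ((hN e heN).1 hx)
  refine ⟨card_union_of_disjoint hdisj, ?_, ?_⟩
  · intro f hf g hg hfg
    simp only [coe_union, Set.mem_union, mem_coe] at hf hg
    rcases hf with hf | hf <;> rcases hg with hg | hg
    · exact hMp hf hg hfg
    · exact disjoint_left.mpr fun x hx hxg =>
        (disjoint_left.mp hXY ((hM f hf).1 hx)) ((hN g hg).1 hxg)
    · exact disjoint_left.mpr fun x hx hxg =>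
        (disjoint_left.mp hXY ((hM g hg).1 hxg)) ((hN f hf).1 hx)
    · exact hNp hf hg hfg
  · intro e he
    rcases mem_union.mp he with he | he
    · exact ⟨(hM e he).1.trans subset_union_left, (hM e he).2⟩
    · exact ⟨(hN e he).1.trans subset_union_right, (hN e he).2⟩

/-- Greedy selection of disjoint filler sets. -/
lemma fillers_lemma (c : ℕ) :
    ∀ (O : Finset V) (T : V → Finset V),
    (∀ w ∈ O, O.card * c ≤ (T w).card) →
    ∃ F : V → Finset V, (∀ w ∈ O, F w ⊆ T w ∧ (F w).card = c) ∧
      (∀ w ∈ O, ∀ w' ∈ O, w ≠ w' → Disjoint (F w) (F w')) := by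
  intro O
  induction O using Finset.induction with
  | empty => exact fun T _ => ⟨fun _ => ∅, by simp, by simp⟩
  | @insert a O ha ih =>
    intro T hT
    have hci : (insert a O).card * c = O.card * c + c := by
      rw [card_insert_of_notMem ha]; ring
    obtain ⟨Fa, hFaT, hFacard⟩ := Finset.exists_subset_card_eq (s := T a) (n := c)
      (le_trans (by omega) (hT a (mem_insert_self a O)))
    have hT' : ∀ w ∈ O, O.card * c ≤ ((T w) \ Fa).card := by
      intro w hw
      have h1 := hT w (mem_insert_of_mem hw)
      have h2 : (T w).card ≤ ((T w) \ Fa).card + Fa.card := by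
        calc (T w).card ≤ ((T w \ Fa) ∪ Fa).card := card_le_card (fun x hx => by
              by_cases hxf : x ∈ Fa
              · exact mem_union_right _ hxf
              · exact mem_union_left _ (mem_sdiff.mpr ⟨hx, hxf⟩))
          _ ≤ (T w \ Fa).card + Fa.card := card_union_le _ _
      omega
    obtain ⟨F', hF'sub, hF'disj⟩ := ih (fun w => T w \ Fa) hT'
    refine ⟨fun w => if w = a then Fa else F' w, ?_, ?_⟩
    · intro w hw
      rcases mem_insert.mp hw with rfl | hw
      · simp [hFaT, hFacard]
      · have hwa : w ≠ a := fun h => ha (h ▸ hw)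
        simp only [if_neg hwa]
        exact ⟨(hF'sub w hw).1.trans sdiff_subset, (hF'sub w hw).2⟩
    · intro w hw w' hw' hne
      have key : ∀ u, u ∈ O → Disjoint Fa (F' u) := fun u hu =>
        disjoint_left.mpr fun x hx hx' => (mem_sdiff.mp ((hF'sub u hu).1 hx')).2 hx
      rcases mem_insert.mp hw with hwa | hw
      · rcases mem_insert.mp hw' with hw'a | hw'
        · exact absurd (hwa.trans hw'a.symm) hne
        · have hw'ne : w' ≠ a := fun h => ha (h ▸ hw')
          simp only [if_pos hwa, if_neg hw'ne]
          exact key w' hw'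
      · have hwne : w ≠ a := fun h => ha (h ▸ hw)
        rcases mem_insert.mp hw' with hw'a | hw'
        · simp only [if_pos hw'a, if_neg hwne]
          exact (key w hw).symm
        · have hw'ne : w' ≠ a := fun h => ha (h ▸ hw')
          simp only [if_neg hwne, if_neg hw'ne]
          exact hF'disj w hw w' hw' hne

lemma arith_q_le {r k d q ρ : ℕ} (hr : 2 ≤ r) (hd : d + 1 ≤ k)
    (hq : d = r * q + ρ) : q + 1 ≤ k := by
  have : q ≤ r * q := Nat.le_mul_of_pos_left q (by omega)
  omega

lemma arith_Ca {r k s d q ρ : ℕ} (hr : 2 ≤ r) (hs : s + d + 1 = r * (k + 1))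
    (hd : d + 1 ≤ k) (hq : d = r * q + ρ) (hρ : ρ < r) :
    r * (k - q) ≤ s ∧ r * (q + 1) + r ≤ s + 2 := by
  have hqk : q + 1 ≤ k := arith_q_le hr hd hq
  have e2 : r * (k + 1) = r * k + r := by ring
  constructor
  · obtain ⟨m, hm⟩ : ∃ m, k = q + m := ⟨k - q, by omega⟩
    subst hm
    have e5 : q + m - q = m := by omega
    rw [e5]
    have e4 : r * (q + m + 1) = r * q + r * m + r := by ring
    omega
  · have hk1 : r * q + ρ + 1 ≤ k := by omega
    have h3 : r * (r * q + ρ + 1) ≤ r * k := Nat.mul_le_mul_left r hk1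
    have e6 : r * (r * q + ρ + 1) = r * (r * q) + r * ρ + r := by ring
    have h4 : 2 * (r * q) ≤ r * (r * q) := Nat.mul_le_mul_right (r * q) hr
    have h5 : ρ ≤ r * ρ := Nat.le_mul_of_pos_left ρ (by omega)
    have e1 : r * (q + 1) = r * q + r := by ring
    omega

lemma arith_Cb {r k s d f u : ℕ} (hr : 2 ≤ r) (hs : s + d + 1 = r * (k + 1))
    (hd : d + 1 ≤ k) (hf : s = r * u + f) (hfr : f < r) :
    ∃ m₂, d + 1 + f = r * m₂ ∧ u + m₂ = k + 1 := by
  have hu : u ≤ k + 1 := by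
    by_contra h
    have : k + 2 ≤ u := by omega
    have := Nat.mul_le_mul_left r this
    have e : r * (k + 2) = r * (k+1) + r := by ring
    omega
  obtain ⟨m₂, hm₂⟩ : ∃ m₂, k + 1 = u + m₂ := ⟨k + 1 - u, by omega⟩
  have e : r * (u + m₂) = r * u + r * m₂ := by ring
  rw [hm₂] at hs
  exact ⟨m₂, by omega, by omega⟩

lemma arith_case2 {r k s d b n' f₁ c₁ : ℕ} (hr : 2 ≤ r) (hs : s + d + 1 = r * (k + 1))
    (hd : d + 1 ≤ k) (hb : 1 ≤ b) (hn : b + n' = d + 1)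
    (hf₁ : f₁ < r) (hc : b + f₁ = r * c₁) :
    f₁ + n' * (r - 1) + b ≤ s ∧
    ∃ m₀, s = r * m₀ + (f₁ + n' * (r - 1)) ∧ m₀ + c₁ + n' = k + 1 := by
  obtain ⟨r', rfl⟩ : ∃ r', r = r' + 2 := ⟨r - 2, by omega⟩
  have e1 : n' * (r' + 2 - 1) = n' * r' + n' := by
    have h : r' + 2 - 1 = r' + 1 := by omega
    rw [h]; ring
  have h2 : (r' + 2) * (b + n' + 1) ≤ (r' + 2) * (k + 1) :=
    Nat.mul_le_mul_left _ (by omega)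
  have e3 : (r' + 2) * (b + n' + 1) = (r'+2)*b + ((r'+2)*n') + (r' + 2) := by ring
  have e4 : (r'+2)*n' = n' * r' + 2 * n' := by ring
  have e5 : (r'+2)*b = r'*b + 2*b := by ring
  have hbb : b ≤ r' * b + b := by nlinarith
  have hN1 : f₁ + n' * (r' + 2 - 1) + b ≤ s := by omega
  refine ⟨hN1, ?_⟩
  -- m₀ := k + 1 - c₁ - n'
  have hrc : (r'+2) * c₁ + (r'+2) * n' ≤ (r'+2) * (k+1) := by
    have e6 : (r'+2) * c₁ = b + f₁ := hc.symm
    omega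
  have hcn : c₁ + n' ≤ k + 1 := by
    by_contra h
    have h7 : k + 2 ≤ c₁ + n' := by omega
    have := Nat.mul_le_mul_left (r' + 2) h7
    have e7 : (r'+2) * (c₁ + n') = (r'+2)*c₁ + (r'+2)*n' := by ring
    have e8 : (r'+2) * (k + 2) = (r'+2)*(k+1) + (r'+2) := by ring
    omega
  obtain ⟨m₀, hm₀⟩ : ∃ m₀, k + 1 = m₀ + c₁ + n' := ⟨k + 1 - c₁ - n', by omega⟩
  have e9 : (r'+2) * (m₀ + c₁ + n') = (r'+2)*m₀ + (r'+2)*c₁ + (r'+2)*n' := by ring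
  rw [hm₀] at hs
  refine ⟨m₀, by omega, by omega⟩
section UnionBound
variable {V : Type*} [Fintype V] [DecidableEq V]

lemma union_bound {k r s d : ℕ} (hk0 : 0 < k) (hr0 : 0 < r)
    (hs : s + d + 1 = r * (k + 1)) (hdk : d + 1 ≤ k)
    (H : Finset (Finset V)) (hmatch : matchingLE H k) :
    ((((Finset.univ : Finset V).powersetCard s).filter
        (fun S => S.powersetCard r ⊆ H)).sup id).card ≤ s + d := by
  set 𝒞 := (((Finset.univ : Finset V).powersetCard s).filter
        (fun S => S.powersetCard r ⊆ H)) with h𝒞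
  set W := 𝒞.sup id with hW
  by_contra hcon
  push_neg at hcon
  have hWcard : s + d + 1 ≤ W.card := hcon
  -- basic facts
  have hCs : ∀ S ∈ 𝒞, S.card = s := by
    intro S hS
    exact (Finset.mem_powersetCard.mp (Finset.mem_filter.mp hS).1).2
  have hedge : ∀ S ∈ 𝒞, ∀ e, e ⊆ S → e.card = r → e ∈ H := by
    intro S hS e he1 he2
    exact (Finset.mem_filter.mp hS).2 (Finset.mem_powersetCard.mpr ⟨he1, he2⟩)
  have hsubW : ∀ S ∈ 𝒞, S ⊆ W := fun S hS => Finset.le_sup (f := id) hS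
  have hmemW : ∀ w ∈ W, ∃ S ∈ 𝒞, w ∈ S := by
    intro w hw
    rw [hW, Finset.mem_sup] at hw
    exact hw
  -- dispatch r = 1
  rcases Nat.lt_or_ge r 2 with hr1 | hr2
  · have hr : r = 1 := by omega
    subst hr
    set M := W.image (fun w => ({w} : Finset V)) with hM
    have hMH : M ⊆ H := by
      intro e he
      rw [hM, Finset.mem_image] at he
      obtain ⟨w, hw, rfl⟩ := he
      obtain ⟨S, hS, hwS⟩ := hmemW w hw
      exact hedge S hS {w} (Finset.singleton_subset_iff.mpr hwS) (Finset.card_singleton w)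
    have hMp : (M : Set (Finset V)).Pairwise Disjoint := by
      intro e he f hf hef
      simp only [hM, Finset.coe_image, Set.mem_image, Finset.mem_coe] at he hf
      obtain ⟨a, _, rfl⟩ := he
      obtain ⟨b, _, rfl⟩ := hf
      simp only [Finset.disjoint_singleton_left, Finset.mem_singleton]
      intro h; exact hef (by rw [h])
    have hMcard : M.card = W.card :=
      Finset.card_image_of_injective W (fun a b h => by
        simpa using h)
    have := hmatch M hMH hMp
    omega
  -- r ≥ 2
  have hCne : 𝒞.Nonempty := by
    obtain ⟨w, hw⟩ := Finset.card_pos.mp (show 0 < W.card by omega)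
    obtain ⟨S, hS, _⟩ := hmemW w hw
    exact ⟨S, hS⟩
  obtain ⟨A, hA⟩ := hCne
  have hAcard : A.card = s := hCs A hA
  have hACsum : ∀ S, (S ∩ A).card + (S \ A).card = S.card :=
    fun S => Finset.card_inter_add_card_sdiff S A
  by_cases h1 : ∃ C ∈ 𝒞, d + 1 ≤ (C \ A).card
  · -- Case 1
    obtain ⟨C, hC, hCb⟩ := h1
    have hCcard : C.card = s := hCs C hC
    by_cases ht : (C ∩ A).card + 2 ≤ r
    · -- (C-a) : t small, two separate packings
      have hq := Nat.div_add_mod d r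
      have hdq : d = r * (d / r) + d % r := by omega
      have hρ : d % r < r := Nat.mod_lt d (by omega)
      obtain ⟨ha1, ha2⟩ := arith_Ca hr2 hs hdk hdq hρ
      have hqk : (d / r) + 1 ≤ k := arith_q_le hr2 hdk hdq
      obtain ⟨A₀, hA₀sub, hA₀card⟩ :=
        Finset.exists_subset_card_eq (s := A) (n := r * (k - d / r)) (by omega)
      have hCA : r * (d / r + 1) ≤ (C \ A).card := by
        have h5 : (C ∩ A).card + (C \ A).card = C.card :=
          Finset.card_inter_add_card_sdiff C A
        rw [hCcard] at h5
        omega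
      obtain ⟨C₀, hC₀sub, hC₀card⟩ :=
        Finset.exists_subset_card_eq (s := C \ A) (n := r * (d / r + 1)) hCA
      obtain ⟨M₁, hM₁card, hM₁sub, hM₁pair⟩ := partition_lemma (by omega : 0 < r) _ _ hA₀card
      obtain ⟨M₂, hM₂card, hM₂sub, hM₂pair⟩ := partition_lemma (by omega : 0 < r) _ _ hC₀card
      have hdisjXY : Disjoint A₀ C₀ := by
        rw [Finset.disjoint_left]
        intro x hx hx'
        exact (Finset.mem_sdiff.mp (hC₀sub hx')).2 (hA₀sub hx)
      obtain ⟨hcard, hpair, _⟩ := combine_matchings hdisjXY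
        (fun e he => ⟨(hM₁sub e he).1, Finset.card_pos.mp ((hM₁sub e he).2 ▸ (by omega : 0 < r))⟩)
        (fun e he => ⟨(hM₂sub e he).1, Finset.card_pos.mp ((hM₂sub e he).2 ▸ (by omega : 0 < r))⟩)
        hM₁pair hM₂pair
      have hMH : M₁ ∪ M₂ ⊆ H := by
        intro e he
        rcases Finset.mem_union.mp he with he | he
        · exact hedge A hA e ((hM₁sub e he).1.trans hA₀sub) (hM₁sub e he).2
        · exact hedge C hC e (((hM₂sub e he).1.trans hC₀sub).trans Finset.sdiff_subset)
            (hM₂sub e he).2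
      have := hmatch _ hMH hpair
      omega
    · -- (C-b) : t ≥ r - 1
      push_neg at ht
      have hf := Nat.div_add_mod s r
      have hfr : s % r < r := Nat.mod_lt s (by omega)
      have hsu : s = r * (s / r) + s % r := by omega
      obtain ⟨m₂, hm₂, hum⟩ := arith_Cb hr2 hs hdk hsu hfr
      obtain ⟨F, hFsub, hFcard⟩ :=
        Finset.exists_subset_card_eq (s := C ∩ A) (n := s % r) (by omega)
      obtain ⟨G, hGsub, hGcard⟩ :=
        Finset.exists_subset_card_eq (s := C \ A) (n := d + 1) hCb
      have hFA : F ⊆ A := hFsub.trans Finset.inter_subset_right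
      have hAFcard : (A \ F).card = r * (s / r) := by
        rw [Finset.card_sdiff_of_subset hFA, hAcard, hFcard]; omega
      have hGFdisj : Disjoint G F := by
        rw [Finset.disjoint_left]
        intro x hx hx'
        exact (Finset.mem_sdiff.mp (hGsub hx)).2 (hFA hx')
      have hGFcard : (G ∪ F).card = r * m₂ := by
        rw [Finset.card_union_of_disjoint hGFdisj, hGcard, hFcard]; omega
      obtain ⟨M₁, hM₁card, hM₁sub, hM₁pair⟩ := partition_lemma (by omega : 0 < r) _ _ hAFcard
      obtain ⟨M₂, hM₂card, hM₂sub, hM₂pair⟩ := partition_lemma (by omega : 0 < r) _ _ hGFcard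
      have hdisjXY : Disjoint (A \ F) (G ∪ F) := by
        rw [Finset.disjoint_left]
        intro x hx hx'
        have hxA := Finset.mem_sdiff.mp hx
        rcases Finset.mem_union.mp hx' with h | h
        · exact (Finset.mem_sdiff.mp (hGsub h)).2 hxA.1
        · exact hxA.2 h
      obtain ⟨hcard, hpair, _⟩ := combine_matchings hdisjXY
        (fun e he => ⟨(hM₁sub e he).1, Finset.card_pos.mp ((hM₁sub e he).2 ▸ (by omega : 0 < r))⟩)
        (fun e he => ⟨(hM₂sub e he).1, Finset.card_pos.mp ((hM₂sub e he).2 ▸ (by omega : 0 < r))⟩)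
        hM₁pair hM₂pair
      have hMH : M₁ ∪ M₂ ⊆ H := by
        intro e he
        rcases Finset.mem_union.mp he with he | he
        · exact hedge A hA e (((hM₁sub e he).1.trans Finset.sdiff_subset)) (hM₁sub e he).2
        · refine hedge C hC e ?_ (hM₂sub e he).2
          refine ((hM₂sub e he).1.trans ?_)
          intro x hx
          rcases Finset.mem_union.mp hx with h | h
          · exact (Finset.mem_sdiff.mp (hGsub h)).1
          · exact (Finset.inter_subset_left) (hFsub h)
      have := hmatch _ hMH hpair
      omega
  · -- Case 2 : every clique has at most d vertices outside A
    push_neg at h1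
    replace h1 : ∀ C ∈ 𝒞, (C \ A).card ≤ d := fun C hC => by
      have := h1 C hC; omega
    obtain ⟨C₁, hC₁, hmax⟩ := Finset.exists_max_image 𝒞 (fun C => (C \ A).card) ⟨A, hA⟩
    set b := (C₁ \ A).card with hb
    have hbd : b ≤ d := h1 C₁ hC₁
    have hWup : W ⊆ (W \ A) ∪ A := by
      intro x hx
      by_cases hxA : x ∈ A
      · exact Finset.mem_union_right _ hxA
      · exact Finset.mem_union_left _ (Finset.mem_sdiff.mpr ⟨hx, hxA⟩)
    have hWAcard : d + 1 ≤ (W \ A).card := by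
      have h2 := Finset.card_le_card hWup
      have h3 := Finset.card_union_le (W \ A) A
      omega
    have hb1 : 1 ≤ b := by
      obtain ⟨w, hw⟩ := Finset.card_pos.mp (show 0 < (W \ A).card by omega)
      have hwW : w ∈ W := (Finset.mem_sdiff.mp hw).1
      have hwA : w ∉ A := (Finset.mem_sdiff.mp hw).2
      obtain ⟨S, hS, hwS⟩ := hmemW w hwW
      have : 1 ≤ (S \ A).card :=
        Finset.card_pos.mpr ⟨w, Finset.mem_sdiff.mpr ⟨hwS, hwA⟩⟩
      exact le_trans this (hmax S hS)
    set G₁ := C₁ \ A with hG₁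
    have hG₁W : G₁ ⊆ W \ A := Finset.sdiff_subset_sdiff (hsubW C₁ hC₁) (le_refl A)
    set n' := d + 1 - b with hn'
    have hn : b + n' = d + 1 := by omega
    have hOex : n' ≤ ((W \ A) \ G₁).card := by
      rw [Finset.card_sdiff_of_subset hG₁W]
      omega
    obtain ⟨O, hOsub, hOcard⟩ := Finset.exists_subset_card_eq hOex
    have hOWA : O ⊆ W \ A := hOsub.trans Finset.sdiff_subset
    -- choose a clique for each vertex of O
    have hOS : ∀ w : V, ∃ S, w ∈ O → (S ∈ 𝒞 ∧ w ∈ S) := by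
      intro w
      by_cases hw : w ∈ O
      · obtain ⟨S, hS, hwS⟩ := hmemW w (Finset.mem_sdiff.mp (hOWA hw)).1
        exact ⟨S, fun _ => ⟨hS, hwS⟩⟩
      · exact ⟨∅, fun h => absurd h hw⟩
    choose Sw hSw using hOS
    -- define f₁ and c₁
    set v := b % r with hv
    set f₁ := if v = 0 then 0 else r - v with hf₁
    set c₁ := if v = 0 then b / r else b / r + 1 with hc₁
    have hbr := Nat.div_add_mod b r
    have hf₁r : f₁ < r := by
      rw [hf₁]
      split
      · omega
      · have : 0 < v := by omega
        omega
    have hcc : b + f₁ = r * c₁ := by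
      rw [hf₁, hc₁]
      by_cases h0 : v = 0
      · simp only [if_pos h0]
        omega
      · simp only [if_neg h0]
        have e : r * (b / r + 1) = r * (b / r) + r := by ring
        have hvr : v < r := Nat.mod_lt b (by omega)
        omega
    obtain ⟨hsupply, m₀, hm₀, hm₀sum⟩ := arith_case2 hr2 hs hdk hb1 hn hf₁r hcc
    -- pick F₁
    have hAC₁ : (C₁ ∩ A).card + b = s := by
      have := Finset.card_inter_add_card_sdiff C₁ A
      rw [hCs C₁ hC₁] at this
      omega
    obtain ⟨F₁, hF₁sub, hF₁card⟩ :=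
      Finset.exists_subset_card_eq (s := C₁ ∩ A) (n := f₁) (by omega)
    have hF₁A : F₁ ⊆ A := hF₁sub.trans Finset.inter_subset_right
    -- pick the fillers
    have hTbound : ∀ w ∈ O, O.card * (r - 1) ≤ ((A ∩ Sw w) \ F₁).card := by
      intro w hw
      have hSwC : Sw w ∈ 𝒞 := (hSw w hw).1
      have hACS : (Sw w ∩ A).card + (Sw w \ A).card = s := by
        have := Finset.card_inter_add_card_sdiff (Sw w) A
        rw [hCs _ hSwC] at this
        omega
      have hSb : (Sw w \ A).card ≤ b := hmax _ hSwC
      have h6 : ((A ∩ Sw w) \ F₁).card + F₁.card ≥ (A ∩ Sw w).card := by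
        have := Finset.le_card_sdiff F₁ (A ∩ Sw w)
        omega
      have h7 : (A ∩ Sw w).card = (Sw w ∩ A).card := by rw [Finset.inter_comm]
      have h8 : n' * (r - 1) ≤ s - b - f₁ := by
        have h9 : f₁ + n' * (r - 1) + b ≤ s := hsupply
        omega
      rw [hOcard]
      omega
    obtain ⟨F, hFsub, hFdisj⟩ := fillers_lemma (r - 1) O (fun w => (A ∩ Sw w) \ F₁) hTbound
    set FO := O.biUnion F with hFO
    have hFOcard : FO.card = n' * (r - 1) := by
      rw [hFO, Finset.card_biUnion (fun w hw w' hw' hne => hFdisj w hw w' hw' hne)]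
      rw [Finset.sum_congr rfl (fun w hw => (hFsub w hw).2)]
      rw [Finset.sum_const, hOcard, smul_eq_mul]
    have hFOA : FO ⊆ A := by
      intro x hx
      obtain ⟨w, hw, hxF⟩ := Finset.mem_biUnion.mp hx
      exact Finset.mem_of_mem_inter_left (Finset.mem_sdiff.mp ((hFsub w hw).1 hxF)).1
    have hF₁FO : Disjoint F₁ FO := by
      rw [Finset.disjoint_left]
      intro x hx hx'
      obtain ⟨w, hw, hxF⟩ := Finset.mem_biUnion.mp hx'
      exact (Finset.mem_sdiff.mp ((hFsub w hw).1 hxF)).2 hx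
    have hDcard : (F₁ ∪ FO).card = f₁ + n' * (r - 1) := by
      rw [Finset.card_union_of_disjoint hF₁FO, hF₁card, hFOcard]
    have hFFA : F₁ ∪ FO ⊆ A := Finset.union_subset hF₁A hFOA
    have hAremcard : (A \ (F₁ ∪ FO)).card = r * m₀ := by
      rw [Finset.card_sdiff_of_subset hFFA, hAcard, hDcard]
      omega
    have hGF₁ : Disjoint G₁ F₁ := by
      rw [Finset.disjoint_left]
      intro x hx hx'
      exact (Finset.mem_sdiff.mp hx).2 (hF₁A hx')
    have hGF₁card : (G₁ ∪ F₁).card = r * c₁ := by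
      rw [Finset.card_union_of_disjoint hGF₁, hF₁card, ← hb]
      omega
    obtain ⟨M₀, hM₀card, hM₀sub, hM₀pair⟩ := partition_lemma (by omega : 0 < r) _ _ hAremcard
    obtain ⟨M₁, hM₁card, hM₁sub, hM₁pair⟩ := partition_lemma (by omega : 0 < r) _ _ hGF₁card
    set M₂ := O.image (fun w => insert w (F w)) with hM₂
    -- facts about M₂ edges
    have hwnF : ∀ w ∈ O, w ∉ F w := by
      intro w hw hmem
      have := Finset.mem_of_mem_inter_left (Finset.mem_sdiff.mp ((hFsub w hw).1 hmem)).1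
      exact (Finset.mem_sdiff.mp (hOWA hw)).2 this
    have hM₂edge : ∀ w ∈ O, insert w (F w) ⊆ Sw w ∧ (insert w (F w)).card = r := by
      intro w hw
      constructor
      · intro x hx
        rcases Finset.mem_insert.mp hx with h | hx
        · rw [h]; exact (hSw w hw).2
        · exact Finset.mem_of_mem_inter_right
            (Finset.mem_sdiff.mp ((hFsub w hw).1 hx)).1
      · rw [Finset.card_insert_of_notMem (hwnF w hw), (hFsub w hw).2]
        omega
    have hM₂H : ∀ e ∈ M₂, e ∈ H := by
      intro e he
      rw [hM₂, Finset.mem_image] at he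
      obtain ⟨w, hw, rfl⟩ := he
      exact hedge _ (hSw w hw).1 _ (hM₂edge w hw).1 (hM₂edge w hw).2
    have hM₂supp : ∀ e ∈ M₂, e ⊆ O ∪ FO ∧ e.Nonempty := by
      intro e he
      rw [hM₂, Finset.mem_image] at he
      obtain ⟨w, hw, rfl⟩ := he
      refine ⟨?_, ⟨w, Finset.mem_insert_self w _⟩⟩
      intro x hx
      rcases Finset.mem_insert.mp hx with rfl | hx
      · exact Finset.mem_union_left _ hw
      · exact Finset.mem_union_right _ (Finset.mem_biUnion.mpr ⟨w, hw, hx⟩)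
    have hM₂card : M₂.card = n' := by
      rw [hM₂, ← hOcard]
      apply Finset.card_image_of_injOn
      intro w hw w' hw' heq
      rw [Finset.mem_coe] at hw hw'
      by_contra hne
      have heq' : insert w (F w) = insert w' (F w') := heq
      have hw'mem : w' ∈ insert w (F w) := by
        rw [heq']; exact Finset.mem_insert_self w' _
      rcases Finset.mem_insert.mp hw'mem with h | h
      · exact hne h.symm
      · have := Finset.mem_of_mem_inter_left (Finset.mem_sdiff.mp ((hFsub w hw).1 h)).1
        exact (Finset.mem_sdiff.mp (hOWA hw')).2 this
    have hM₂pair : (M₂ : Set (Finset V)).Pairwise Disjoint := by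
      intro e he f hf hef
      simp only [hM₂, Finset.coe_image, Set.mem_image, Finset.mem_coe] at he hf
      obtain ⟨w, hw, rfl⟩ := he
      obtain ⟨w', hw', rfl⟩ := hf
      have hne : w ≠ w' := by
        intro h; subst h; exact hef rfl
      rw [Finset.disjoint_left]
      intro x hx hx'
      rcases Finset.mem_insert.mp hx with h1 | hx
      · rcases Finset.mem_insert.mp hx' with h2 | h2
        · exact hne (h1.symm.trans h2)
        · have := Finset.mem_of_mem_inter_left (Finset.mem_sdiff.mp ((hFsub w' hw').1 h2)).1
          rw [h1] at this
          exact (Finset.mem_sdiff.mp (hOWA hw)).2 this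
      · rcases Finset.mem_insert.mp hx' with h2 | h2
        · have := Finset.mem_of_mem_inter_left (Finset.mem_sdiff.mp ((hFsub w hw).1 hx)).1
          rw [h2] at this
          exact (Finset.mem_sdiff.mp (hOWA hw')).2 this
        · exact Finset.disjoint_left.mp (hFdisj w hw w' hw' hne) hx h2
    -- combine M₀ and M₁
    have hd01 : Disjoint (A \ (F₁ ∪ FO)) (G₁ ∪ F₁) := by
      rw [Finset.disjoint_left]
      intro x hx hx'
      have hxA := Finset.mem_sdiff.mp hx
      rcases Finset.mem_union.mp hx' with h | h
      · exact (Finset.mem_sdiff.mp h).2 hxA.1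
      · exact hxA.2 (Finset.mem_union_left _ h)
    obtain ⟨hcard01, hpair01, hsupp01⟩ := combine_matchings hd01
      (fun e he => ⟨(hM₀sub e he).1, Finset.card_pos.mp ((hM₀sub e he).2 ▸ (by omega : 0 < r))⟩)
      (fun e he => ⟨(hM₁sub e he).1, Finset.card_pos.mp ((hM₁sub e he).2 ▸ (by omega : 0 < r))⟩)
      hM₀pair hM₁pair
    -- combine with M₂
    have hd2 : Disjoint ((A \ (F₁ ∪ FO)) ∪ (G₁ ∪ F₁)) (O ∪ FO) := by
      rw [Finset.disjoint_left]
      intro x hx hx'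
      have hxO : x ∈ O → x ∈ A → False := fun h hA' =>
        (Finset.mem_sdiff.mp (hOWA h)).2 hA'
      rcases Finset.mem_union.mp hx with h | h
      · have hxA := Finset.mem_sdiff.mp h
        rcases Finset.mem_union.mp hx' with h' | h'
        · exact hxO h' hxA.1
        · exact hxA.2 (Finset.mem_union_right _ h')
      · rcases Finset.mem_union.mp h with h | h
        · rcases Finset.mem_union.mp hx' with h' | h'
          · exact (Finset.mem_sdiff.mp (hOsub h')).2 h
          · exact (Finset.mem_sdiff.mp h).2 (hFOA h')
        · rcases Finset.mem_union.mp hx' with h' | h'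
          · exact hxO h' (hF₁A h)
          · exact Finset.disjoint_left.mp hF₁FO h h'
    obtain ⟨hcard2, hpair2, _⟩ := combine_matchings hd2 hsupp01 hM₂supp hpair01 hM₂pair
    -- final contradiction
    have hMH : (M₀ ∪ M₁) ∪ M₂ ⊆ H := by
      intro e he
      rcases Finset.mem_union.mp he with he | he
      · rcases Finset.mem_union.mp he with he | he
        · exact hedge A hA e ((hM₀sub e he).1.trans Finset.sdiff_subset) (hM₀sub e he).2
        · refine hedge C₁ hC₁ e ((hM₁sub e he).1.trans ?_) (hM₁sub e he).2
          intro x hx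
          rcases Finset.mem_union.mp hx with h | h
          · exact (Finset.mem_sdiff.mp h).1
          · exact Finset.mem_of_mem_inter_left (hF₁sub h)
      · exact hM₂H e he
    have hfinal := hmatch _ hMH hpair2
    rw [hcard2, hcard01, hM₀card, hM₁card, hM₂card] at hfinal
    omega

end UnionBound

lemma choose_le_choose_add (m t : ℕ) : ∀ j, m.choose t ≤ (m + j).choose (t + j) := by
  intro j
  induction j with
  | zero => simp
  | succ j ih =>
    calc m.choose t ≤ (m + j).choose (t + j) := ih
      _ ≤ (m + j + 1).choose (t + j + 1) := by
          rw [Nat.choose_succ_succ]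
          omega

lemma card_supersets {V : Type*} [DecidableEq V] (W E₀ : Finset V) (hE : E₀ ⊆ W)
    {s r : ℕ} (hE₀ : E₀.card = r) (hrs : r ≤ s) :
    ((W.powersetCard s).filter (fun S => E₀ ⊆ S)).card = (W.card - r).choose (s - r) := by
  have h1 : ((W \ E₀).powersetCard (s - r)).card = (W.card - r).choose (s - r) := by
    rw [Finset.card_powersetCard, Finset.card_sdiff_of_subset hE, hE₀]
  rw [← h1]
  apply Finset.card_bij' (i := fun S _ => S \ E₀) (j := fun T _ => T ∪ E₀)
  · intro S hS
    simp only [Finset.mem_filter, Finset.mem_powersetCard] at hS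
    obtain ⟨⟨hSW, hScard⟩, hES⟩ := hS
    rw [Finset.mem_powersetCard]
    exact ⟨Finset.sdiff_subset_sdiff hSW (le_refl _),
      by rw [Finset.card_sdiff_of_subset hES, hScard, hE₀]⟩
  · intro T hT
    simp only [Finset.mem_powersetCard] at hT
    obtain ⟨hTW, hTcard⟩ := hT
    have hTE : Disjoint T E₀ := by
      rw [Finset.disjoint_left]
      intro x hx
      exact (Finset.mem_sdiff.mp (hTW hx)).2
    simp only [Finset.mem_filter, Finset.mem_powersetCard]
    refine ⟨⟨Finset.union_subset (hTW.trans Finset.sdiff_subset) hE, ?_⟩,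
      Finset.subset_union_right⟩
    rw [Finset.card_union_of_disjoint hTE, hTcard, hE₀]
    omega
  · intro S hS
    simp only [Finset.mem_filter, Finset.mem_powersetCard] at hS
    exact Finset.sdiff_union_of_subset hS.2
  · intro T hT
    simp only [Finset.mem_powersetCard] at hT
    have hTE : Disjoint T E₀ := by
      rw [Finset.disjoint_left]
      intro x hx
      exact (Finset.mem_sdiff.mp (hT.1 hx)).2
    rw [Finset.union_sdiff_cancel_right hTE]

end Helpers

/-- Theorem 1.3 (III), second part. -/
theorem max_cliques_large_s_stability {V : Type*} [Fintype V] [DecidableEq V] {n k r s : ℕ}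
    (hn0 : 0 < n) (hk0 : 0 < k) (hr0 : 0 < r) (hs0 : 0 < s)
    (hs1 : (r - 1) * k + r ≤ s) (hs2 : s ≤ r * k + r - 1)
    (hn : r * k + r - 1 ≤ n)
    (hcard : Fintype.card V = n)
    (H : Finset (Finset V)) (hunif : ∀ E ∈ H, E.card = r)
    (hmatch : matchingLE H k)
    (hlt : cliqueCount r s H < Nat.choose (r * k + r - 1) s) :
    cliqueCount r s H ≤ Nat.choose (r * k + r - 1) s - Nat.choose (r * k - 1) (s - r) := by
  have hrk : (r - 1) * k + k = r * k := by
    have hr' : r - 1 + 1 = r := by omega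
    calc (r - 1) * k + k = ((r - 1) + 1) * k := by ring
      _ = r * k := by rw [hr']
  have hrk1 : 1 ≤ r * k := by nlinarith
  have hrs : r ≤ s := by omega
  obtain ⟨d, hsd, hdk⟩ : ∃ d, s + d + 1 = r * (k + 1) ∧ d + 1 ≤ k := by
    refine ⟨r * k + r - 1 - s, ?_, ?_⟩
    · have e2 : r * (k + 1) = r * k + r := by ring
      omega
    · omega
  set 𝒞 := (((Finset.univ : Finset V).powersetCard s).filter
      (fun S => S.powersetCard r ⊆ H)) with h𝒞
  set W := 𝒞.sup id with hW
  have hkr2 : r * (k + 1) = r * k + r := by ring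
  have hUB : W.card ≤ s + d := union_bound hk0 hr0 hsd hdk H hmatch
  have hcount : cliqueCount r s H = 𝒞.card := rfl
  have hCs : ∀ S ∈ 𝒞, S.card = s := by
    intro S hS
    exact (Finset.mem_powersetCard.mp (Finset.mem_filter.mp hS).1).2
  have hsubW : ∀ S ∈ 𝒞, S ⊆ W := fun S hS => Finset.le_sup (f := id) hS
  have hsub : 𝒞 ⊆ W.powersetCard s := by
    intro S hS
    exact Finset.mem_powersetCard.mpr ⟨hsubW S hS, hCs S hS⟩
  have hle : 𝒞.card ≤ (W.card).choose s := by
    have := Finset.card_le_card hsub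
    rwa [Finset.card_powersetCard] at this
  have hgoal_eq : r * k + r - 1 = s + d := by omega
  have hgoal_eq2 : r * k - 1 = s + d - r := by omega
  rw [hcount, hgoal_eq, hgoal_eq2]
  obtain ⟨s', rfl⟩ : ∃ s', s = s' + 1 := ⟨s - 1, by omega⟩
  rcases Nat.lt_or_ge W.card (s' + 1 + d) with hWlt | hWge
  · -- W small
    have h2 : 𝒞.card ≤ (s' + d).choose (s' + 1) := by
      calc 𝒞.card ≤ (W.card).choose (s' + 1) := hle
        _ ≤ (s' + d).choose (s' + 1) := Nat.choose_le_choose _ (by omega)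
    have hpascal : (s' + 1 + d).choose (s' + 1) =
        (s' + d).choose s' + (s' + d).choose (s' + 1) := by
      have e : s' + 1 + d = (s' + d) + 1 := by omega
      rw [e, Nat.choose_succ_succ]
    have hmono : (s' + 1 + d - r).choose (s' + 1 - r) ≤ (s' + d).choose s' := by
      calc (s' + 1 + d - r).choose (s' + 1 - r)
          ≤ ((s' + 1 + d - r) + (r - 1)).choose ((s' + 1 - r) + (r - 1)) :=
            choose_le_choose_add _ _ _
        _ = (s' + d).choose s' := by
            congr 1 <;> omega
    omega
  · -- W.card = s + d
    have hWeq : W.card = s' + 1 + d := by omega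
    have hpow : (W.powersetCard (s' + 1)).card = (s' + 1 + d).choose (s' + 1) := by
      rw [Finset.card_powersetCard, hWeq]
    have hltC : 𝒞.card < (W.powersetCard (s' + 1)).card := by
      rw [hpow, ← hgoal_eq]
      exact hlt
    obtain ⟨S₀, hS₀mem, hS₀not⟩ :=
      Finset.exists_of_ssubset (Finset.ssubset_iff_subset_ne.mpr
        ⟨hsub, fun h => by rw [h] at hltC; omega⟩)
    obtain ⟨hS₀W, hS₀card⟩ := Finset.mem_powersetCard.mp hS₀mem
    have hS₀univ : S₀ ∈ (Finset.univ : Finset V).powersetCard (s' + 1) :=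
      Finset.mem_powersetCard.mpr ⟨Finset.subset_univ S₀, hS₀card⟩
    have hS₀bad : ¬ (S₀.powersetCard r ⊆ H) := by
      intro h
      exact hS₀not (Finset.mem_filter.mpr ⟨hS₀univ, h⟩)
    obtain ⟨E₀, hE₀mem, hE₀not⟩ := Finset.not_subset.mp hS₀bad
    obtain ⟨hE₀S, hE₀card⟩ := Finset.mem_powersetCard.mp hE₀mem
    have hE₀W : E₀ ⊆ W := hE₀S.trans hS₀W
    have hCsub2 : 𝒞 ⊆ (W.powersetCard (s' + 1)).filter (fun S => ¬ E₀ ⊆ S) := by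
      intro S hS
      refine Finset.mem_filter.mpr ⟨hsub hS, ?_⟩
      intro hES
      exact hE₀not ((Finset.mem_filter.mp hS).2
        (Finset.mem_powersetCard.mpr ⟨hES, hE₀card⟩))
    have hsplit := Finset.card_filter_add_card_filter_not
      (s := W.powersetCard (s' + 1)) (p := fun S => E₀ ⊆ S)
    have hsup := card_supersets W E₀ hE₀W hE₀card hrs
    have h3 : 𝒞.card ≤ ((W.powersetCard (s' + 1)).filter (fun S => ¬ E₀ ⊆ S)).card :=
      Finset.card_le_card hCsub2
    rw [hWeq] at hsup
    omega
end

section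
/- Let H be an r-graph on the vertex set [n]. For any integers i, j with 1 ≤ i < j ≤ n and any integer s ≥ r, the shifted hypergraph satisfies K_s^r(S_ij(H)) ≥ K_s^r(H). -/
open Finset

section Aux
variable {n : ℕ} {H : Finset (Finset (Fin n))} {i j : Fin n} {E : Finset (Fin n)}

lemma aux_mem_shift_self (hE : E ∈ H)
    (h : j ∉ E ∨ i ∈ E ∨ insert i (E.erase j) ∈ H) : E ∈ shift H i j := by
  have heq : shiftEdge H i j E = E := by
    unfold shiftEdge; rw [if_neg]; tauto
  exact Finset.mem_image.2 ⟨E, hE, heq⟩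

lemma aux_mem_shift_swap (hij : i ≠ j) (hiE : i ∈ E) (hjE : j ∉ E)
    (hP : insert j (E.erase i) ∈ H) : E ∈ shift H i j := by
  by_cases hEH : E ∈ H
  · exact aux_mem_shift_self hEH (Or.inl hjE)
  · have hjF : j ∈ insert j (E.erase i) := Finset.mem_insert_self _ _
    have hiF : i ∉ insert j (E.erase i) := by
      simp [Finset.mem_insert, hij]
    have hFe : (insert j (E.erase i)).erase j = E.erase i :=
      Finset.erase_insert (fun h => hjE (Finset.erase_subset _ _ h))
    have hins : insert i ((insert j (E.erase i)).erase j) = E := by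
      rw [hFe, Finset.insert_erase hiE]
    refine Finset.mem_image.2 ⟨insert j (E.erase i), hP, ?_⟩
    unfold shiftEdge
    rw [if_pos ⟨hjF, hiF, by rw [hins]; exact hEH⟩, hins]

lemma aux_key (hE : E ∈ H) (hE' : E ∉ shift H i j) :
    j ∈ E ∧ i ∉ E ∧ insert i (E.erase j) ∉ H := by
  by_cases hj : j ∈ E
  · by_cases hi : i ∈ E
    · exact absurd (aux_mem_shift_self hE (Or.inr (Or.inl hi))) hE'
    · exact ⟨hj, hi, fun hc => hE' (aux_mem_shift_self hE (Or.inr (Or.inr hc)))⟩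
  · exact absurd (aux_mem_shift_self hE (Or.inl hj)) hE'

lemma aux_bad {r : ℕ} {A : Finset (Fin n)} (hAcl : A.powersetCard r ⊆ H)
    (hA' : ¬ A.powersetCard r ⊆ shift H i j) :
    ∃ R, R ⊆ A ∧ R.card = r ∧ j ∈ R ∧ i ∉ R ∧ i ∉ A ∧ insert i (R.erase j) ∉ H := by
  obtain ⟨R, hR, hRnot⟩ := Finset.not_subset.1 hA'
  rw [Finset.mem_powersetCard] at hR
  obtain ⟨hRA, hRr⟩ := hR
  have hRH : R ∈ H := hAcl (Finset.mem_powersetCard.2 ⟨hRA, hRr⟩)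
  obtain ⟨hjR, hiR, hins⟩ := aux_key hRH hRnot
  have hr1 : 1 ≤ r := hRr ▸ Finset.card_pos.2 ⟨j, hjR⟩
  have hiA : i ∉ A := by
    intro hiA
    apply hins
    apply hAcl
    rw [Finset.mem_powersetCard]
    constructor
    · intro x hx
      rcases Finset.mem_insert.1 hx with rfl | hx
      · exact hiA
      · exact hRA (Finset.erase_subset _ _ hx)
    · rw [Finset.card_insert_of_notMem (fun h => hiR (Finset.erase_subset _ _ h)),
        Finset.card_erase_of_mem hjR, hRr]
      omega
  exact ⟨R, hRA, hRr, hjR, hiR, hiA, hins⟩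

end Aux

/-- Lemma 3.1, first part: shifting does not decrease the number of cliques. -/
theorem cliqueCount_le_shift {n r s : ℕ}
    (H : Finset (Finset (Fin n))) (hunif : ∀ E ∈ H, E.card = r)
    (i j : Fin n) (hij : i < j) (hrs : r ≤ s) :
    cliqueCount r s H ≤ cliqueCount r s (shift H i j) := by
  classical
  have hij' : i ≠ j := ne_of_lt hij
  unfold cliqueCount
  apply Finset.card_le_card_of_injOn
    (fun A => if A.powersetCard r ⊆ shift H i j then A else insert i (A.erase j))
  · intro A hA
    simp only [Finset.mem_coe, Finset.mem_filter, Finset.mem_powersetCard] at hA ⊢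
    obtain ⟨⟨hAu, hAcard⟩, hAcl⟩ := hA
    by_cases hcl' : A.powersetCard r ⊆ shift H i j
    · rw [if_pos hcl']; exact ⟨⟨hAu, hAcard⟩, hcl'⟩
    · rw [if_neg hcl']
      obtain ⟨R, hRA, hRr, hjR, hiR, hiA, hins⟩ := aux_bad hAcl hcl'
      have hjA : j ∈ A := hRA hjR
      have hiAe : i ∉ A.erase j := fun h => hiA (Finset.erase_subset _ _ h)
      have hs1 : 1 ≤ s := hAcard ▸ Finset.card_pos.2 ⟨j, hjA⟩
      refine ⟨⟨Finset.subset_univ _, ?_⟩, ?_⟩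
      · rw [Finset.card_insert_of_notMem hiAe, Finset.card_erase_of_mem hjA, hAcard]
        omega
      · intro Q hQ
        rw [Finset.mem_powersetCard] at hQ
        obtain ⟨hQsub, hQr⟩ := hQ
        have hjQ : j ∉ Q := by
          intro hjQ
          rcases Finset.mem_insert.1 (hQsub hjQ) with h | h
          · exact hij' h.symm
          · exact (Finset.notMem_erase j A) h
        by_cases hiQ : i ∈ Q
        · -- use the swap lemma
          have hQA : Q.erase i ⊆ A.erase j := by
            intro x hx
            rcases Finset.mem_insert.1 (hQsub (Finset.erase_subset _ _ hx)) with rfl | h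
            · exact absurd rfl (Finset.ne_of_mem_erase hx)
            · exact h
          have hPA : insert j (Q.erase i) ⊆ A := by
            intro x hx
            rcases Finset.mem_insert.1 hx with rfl | h
            · exact hjA
            · exact Finset.erase_subset _ _ (hQA h)
          have hPcard : (insert j (Q.erase i)).card = r := by
            rw [Finset.card_insert_of_notMem (fun h => hjQ (Finset.erase_subset _ _ h)),
              Finset.card_erase_of_mem hiQ, hQr]
            have : 1 ≤ r := hQr ▸ Finset.card_pos.2 ⟨i, hiQ⟩
            omega
          exact aux_mem_shift_swap hij' hiQ hjQ
            (hAcl (Finset.mem_powersetCard.2 ⟨hPA, hPcard⟩))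
        · have hQA : Q ⊆ A := by
            intro x hx
            rcases Finset.mem_insert.1 (hQsub hx) with rfl | h
            · exact absurd hx hiQ
            · exact Finset.erase_subset _ _ h
          exact aux_mem_shift_self (hAcl (Finset.mem_powersetCard.2 ⟨hQA, hQr⟩))
            (Or.inl hjQ)
  · intro A hA B hB hEq
    simp only [Finset.mem_coe, Finset.mem_filter, Finset.mem_powersetCard] at hA hB
    obtain ⟨⟨-, hAcard⟩, hAcl⟩ := hA
    obtain ⟨⟨-, hBcard⟩, hBcl⟩ := hB
    simp only at hEq
    by_cases hA' : A.powersetCard r ⊆ shift H i j <;>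
      by_cases hB' : B.powersetCard r ⊆ shift H i j
    · rwa [if_pos hA', if_pos hB'] at hEq
    · rw [if_pos hA', if_neg hB'] at hEq
      exfalso
      obtain ⟨R, hRB, hRr, hjR, hiR, hiB, hins⟩ := aux_bad hBcl hB'
      apply hins
      apply hAcl
      rw [Finset.mem_powersetCard]
      refine ⟨?_, ?_⟩
      · intro x hx
        rcases Finset.mem_insert.1 hx with rfl | hx
        · rw [hEq]; exact Finset.mem_insert_self _ _
        · rw [hEq]
          exact Finset.mem_insert_of_mem
            (Finset.mem_erase.2 ⟨Finset.ne_of_mem_erase hx ∘ fun h => h, hRB (Finset.erase_subset _ _ hx)⟩)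
      · rw [Finset.card_insert_of_notMem (fun h => hiR (Finset.erase_subset _ _ h)),
          Finset.card_erase_of_mem hjR, hRr]
        have : 1 ≤ r := hRr ▸ Finset.card_pos.2 ⟨j, hjR⟩
        omega
    · rw [if_neg hA', if_pos hB'] at hEq
      exfalso
      obtain ⟨R, hRA, hRr, hjR, hiR, hiA, hins⟩ := aux_bad hAcl hA'
      apply hins
      apply hBcl
      rw [Finset.mem_powersetCard]
      refine ⟨?_, ?_⟩
      · intro x hx
        rcases Finset.mem_insert.1 hx with rfl | hx
        · rw [← hEq]; exact Finset.mem_insert_self _ _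
        · rw [← hEq]
          exact Finset.mem_insert_of_mem
            (Finset.mem_erase.2 ⟨Finset.ne_of_mem_erase hx ∘ fun h => h, hRA (Finset.erase_subset _ _ hx)⟩)
      · rw [Finset.card_insert_of_notMem (fun h => hiR (Finset.erase_subset _ _ h)),
          Finset.card_erase_of_mem hjR, hRr]
        have : 1 ≤ r := hRr ▸ Finset.card_pos.2 ⟨j, hjR⟩
        omega
    · rw [if_neg hA', if_neg hB'] at hEq
      obtain ⟨RA, hRAA, _, hjRA, _, hiA, _⟩ := aux_bad hAcl hA'
      obtain ⟨RB, hRBB, _, hjRB, _, hiB, _⟩ := aux_bad hBcl hB'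
      have hjA : j ∈ A := hRAA hjRA
      have hjB : j ∈ B := hRBB hjRB
      have h1 : A.erase j = B.erase j := by
        have hiAe : i ∉ A.erase j := fun h => hiA (Finset.erase_subset _ _ h)
        have hiBe : i ∉ B.erase j := fun h => hiB (Finset.erase_subset _ _ h)
        rw [← Finset.erase_insert hiAe, ← Finset.erase_insert hiBe, hEq]
      rw [← Finset.insert_erase hjA, h1, Finset.insert_erase hjB]
end

section
/- Let n, k, r, s be positive integers with k + r ≤ s ≤ rk + r − 1 and n ≥ rk + r − 1, and set a = ⌊(s−r)/k⌋ + 1. Let H be a stable r-graph on the vertex set [n] with matching number ν(H) ≤ k. If every edge of H is contained in at least one s-clique of H, then every edge E of H satisfies |E ∩ [rk+a−1]| ≥ a. -/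
open Finset

lemma exch {n : ℕ} {H : Finset (Finset (Fin n))} (hst : IsStable H)
    {E : Finset (Fin n)} (hE : E ∈ H) {i j : Fin n} (hij : i < j)
    (hjE : j ∈ E) (hiE : i ∉ E) : insert i (E.erase j) ∈ H := by
  by_cases h : insert i (E.erase j) ∈ H
  · exact h
  · have h2 : shiftEdge H i j E ∈ shift H i j := Finset.mem_image_of_mem _ hE
    rw [hst i j hij] at h2
    rw [shiftEdge, if_pos ⟨hjE, hiE, h⟩] at h2
    exact h2

lemma compress {n : ℕ} {H : Finset (Finset (Fin n))} (hst : IsStable H) :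
    ∀ (m : ℕ) (A F : Finset (Fin n)) (φ : Fin n → Fin n),
      F ∈ H → A.card = F.card →
      (∀ x ∈ A, φ x ∈ F) → Set.InjOn φ ↑A →
      (∀ x ∈ A, x ≤ φ x) →
      (A.filter (fun x => φ x ≠ x)).card = m → A ∈ H := by
  intro m
  induction m using Nat.strong_induction_on with
  | _ m ih =>
    intro A F φ hF hcard hmem hinj hle hm
    by_cases hfix : ∀ x ∈ A, φ x = x
    · have hsub : A ⊆ F := fun x hx => (hfix x hx) ▸ hmem x hx
      exact (Finset.eq_of_subset_of_card_le hsub hcard.ge) ▸ hF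
    · push_neg at hfix
      obtain ⟨x, hx, hφx⟩ := hfix
      have hxlt : x < φ x := lt_of_le_of_ne (hle x hx) (Ne.symm hφx)
      have hxfil : x ∈ A.filter (fun x => φ x ≠ x) := Finset.mem_filter.mpr ⟨hx, hφx⟩
      have hmpos : 0 < m := hm ▸ Finset.card_pos.mpr ⟨x, hxfil⟩
      by_cases hxF : x ∈ F
      · -- swap case: find y with φ y = x
        have himg : A.image φ = F := by
          apply Finset.eq_of_subset_of_card_le
          · intro y hy
            obtain ⟨z, hz, rfl⟩ := Finset.mem_image.mp hy
            exact hmem z hz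
          · rw [Finset.card_image_of_injOn hinj]; exact hcard.ge
        obtain ⟨y, hy, hφy⟩ := Finset.mem_image.mp (himg ▸ hxF)
        have hyx : y ≠ x := fun h => hφx (by rw [← h, hφy, h])
        have hylt : y < x := lt_of_le_of_ne (hφy ▸ hle y hy) hyx
        set φ' := Function.update (Function.update φ x x) y (φ x) with hφ'
        have hswap : ∀ z, φ' z = φ (Equiv.swap x y z) := by
          intro z
          rcases eq_or_ne z y with rfl | hzy
          · rw [hφ', Function.update_self, Equiv.swap_apply_right]
          · rcases eq_or_ne z x with rfl | hzx
            · rw [hφ', Function.update_of_ne hyx.symm, Function.update_self,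
                Equiv.swap_apply_left, hφy]
            · rw [hφ', Function.update_of_ne hzy, Function.update_of_ne hzx,
                Equiv.swap_apply_of_ne_of_ne hzx hzy]
        have hswapA : ∀ z : Fin n, z ∈ A → Equiv.swap x y z ∈ A := by
          intro z hz
          rcases eq_or_ne z x with rfl | hzx
          · rwa [Equiv.swap_apply_left]
          · rcases eq_or_ne z y with rfl | hzy
            · rwa [Equiv.swap_apply_right]
            · rwa [Equiv.swap_apply_of_ne_of_ne hzx hzy]
        have hfil : A.filter (fun z => φ' z ≠ z) = (A.filter (fun z => φ z ≠ z)).erase x := by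
          ext z
          simp only [Finset.mem_filter, Finset.mem_erase]
          constructor
          · rintro ⟨hzA, hzne⟩
            rcases eq_or_ne z x with rfl | hzx
            · exfalso; apply hzne
              rw [hswap, Equiv.swap_apply_left, hφy]
            · refine ⟨hzx, hzA, ?_⟩
              rcases eq_or_ne z y with rfl | hzy
              · rw [hφy]; exact Ne.symm hyx
              · rw [hswap, Equiv.swap_apply_of_ne_of_ne hzx hzy] at hzne; exact hzne
          · rintro ⟨hzx, hzA, hzne⟩
            refine ⟨hzA, ?_⟩
            rcases eq_or_ne z y with rfl | hzy
            · rw [hswap, Equiv.swap_apply_right]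
              exact ne_of_gt (hylt.trans hxlt)
            · rw [hswap, Equiv.swap_apply_of_ne_of_ne hzx hzy]; exact hzne
        refine ih (m - 1) (by omega) A F φ' hF hcard ?_ ?_ ?_ ?_
        · intro z hz
          rw [hswap]; exact hmem _ (hswapA z hz)
        · intro p hp q hq hpq
          rw [hswap, hswap] at hpq
          have := hinj (hswapA p hp) (hswapA q hq) hpq
          exact (Equiv.swap x y).injective this
        · intro z hz
          rcases eq_or_ne z y with rfl | hzy
          · rw [hswap, Equiv.swap_apply_right]
            exact le_trans hylt.le (hle x hx)
          · rcases eq_or_ne z x with rfl | hzx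
            · rw [hswap, Equiv.swap_apply_left, hφy]
            · rw [hswap, Equiv.swap_apply_of_ne_of_ne hzx hzy]
              exact hle z hz
        · rw [hfil, Finset.card_erase_of_mem hxfil, hm]
      · -- exchange case
        have hF' : insert x (F.erase (φ x)) ∈ H := exch hst hF hxlt (hmem x hx) hxF
        set φ' := Function.update φ x x with hφ'
        have hfil : A.filter (fun z => φ' z ≠ z) = (A.filter (fun z => φ z ≠ z)).erase x := by
          ext z
          simp only [Finset.mem_filter, Finset.mem_erase]
          constructor
          · rintro ⟨hzA, hzne⟩
            rcases eq_or_ne z x with rfl | hzx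
            · exact (hzne (by rw [hφ', Function.update_self])).elim
            · rw [hφ', Function.update_of_ne hzx] at hzne
              exact ⟨hzx, hzA, hzne⟩
          · rintro ⟨hzx, hzA, hzne⟩
            rw [hφ', Function.update_of_ne hzx]
            exact ⟨hzA, hzne⟩
        refine ih (m - 1) (by omega) A (insert x (F.erase (φ x))) φ' hF' ?_ ?_ ?_ ?_ ?_
        · rw [Finset.card_insert_of_notMem (fun h => hxF (Finset.mem_of_mem_erase h)),
            Finset.card_erase_of_mem (hmem x hx)]
          have hFpos : 0 < F.card := Finset.card_pos.mpr ⟨φ x, hmem x hx⟩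
          omega
        · intro z hz
          by_cases hzx : z = x
          · rw [hzx, hφ', Function.update_self]; exact Finset.mem_insert_self _ _
          · rw [hφ', Function.update_of_ne hzx]
            apply Finset.mem_insert_of_mem
            refine Finset.mem_erase.mpr ⟨?_, hmem z hz⟩
            exact fun h => hzx (hinj hz hx h)
        · intro p hp q hq hpq
          by_cases hpx : p = x
          · by_cases hqx : q = x
            · rw [hpx, hqx]
            · rw [hpx, hφ', Function.update_self, Function.update_of_ne hqx] at hpq
              exact absurd (by rw [hpq]; exact hmem q hq : x ∈ F) hxF
          · by_cases hqx : q = x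
            · rw [hqx, hφ', Function.update_of_ne hpx, Function.update_self] at hpq
              exact absurd (by rw [← hpq]; exact hmem p hp : x ∈ F) hxF
            · rw [hφ', Function.update_of_ne hpx, Function.update_of_ne hqx] at hpq
              exact hinj hp hq hpq
        · intro z hz
          by_cases hzx : z = x
          · rw [hzx, hφ', Function.update_self]
          · rw [hφ', Function.update_of_ne hzx]; exact hle z hz
        · rw [hfil, Finset.card_erase_of_mem hxfil, hm]

/-- Proposition 3.2. -/
theorem stable_edges_meet_initial_segment {n k r s a : ℕ}
    (hn0 : 0 < n) (hk0 : 0 < k) (hr0 : 0 < r) (hs0 : 0 < s)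
    (hs1 : k + r ≤ s) (hs2 : s ≤ r * k + r - 1) (hn : r * k + r - 1 ≤ n)
    (ha : a = (s - r) / k + 1)
    (H : Finset (Finset (Fin n))) (hunif : ∀ E ∈ H, E.card = r)
    (hstable : IsStable H) (hmatch : matchingLE H k)
    (hcl : ∀ E ∈ H, ∃ S : Finset (Fin n),
      S.card = s ∧ S.powersetCard r ⊆ H ∧ E ⊆ S) :
    ∀ E ∈ H, a ≤ (E.filter (fun x : Fin n => (x : ℕ) < r * k + a - 1)).card := by
  intro E hE
  by_contra hcon
  push_neg at hcon
  obtain ⟨S, hScard, hScl, hES⟩ := hcl E hE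
  set b := (s - r) / k with hb
  have hab : a = b + 1 := ha
  have hth : r * k + a - 1 = r * k + b := by omega
  rw [hth, hab] at hcon
  -- basic numeric facts
  have hbk : b * k ≤ s - r := Nat.div_mul_le_self _ _
  have hrs : r < s := by omega
  have hb1 : 1 ≤ b := by
    rw [hb]
    exact (Nat.one_le_div_iff hk0).mpr (by omega)
  have hbr : b < r := by
    rw [hb]
    apply Nat.div_lt_of_lt_mul
    have hmc : k * r = r * k := Nat.mul_comm k r
    omega
  -- counting in E and S
  have hEr : E.card = r := hunif E hE
  have hsplitE := Finset.card_filter_add_card_filter_not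
    (s := E) (p := fun x : Fin n => (x : ℕ) < r * k + b)
  have hout : r - b ≤ (E.filter (fun x : Fin n => ¬ (x : ℕ) < r * k + b)).card := by omega
  have hSout : r - b ≤ (S.filter (fun x : Fin n => ¬ (x : ℕ) < r * k + b)).card :=
    le_trans hout (Finset.card_le_card (Finset.filter_subset_filter _ hES))
  have hTcard : (S.filter (fun x : Fin n => (x : ℕ) < r * k + b)).card ≤ s - r + b := by
    have h1 := Finset.card_filter_add_card_filter_not
      (s := S) (p := fun x : Fin n => (x : ℕ) < r * k + b)
    omega
  -- the sorted embedding of S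
  set σ := S.orderEmbOfFin hScard with hσ
  set g : ℕ → ℕ := fun t => if h : t < s then ((σ ⟨t, h⟩ : Fin n) : ℕ) else 0 with hg
  have hgval : ∀ (t : ℕ) (h : t < s), g t = (σ ⟨t, h⟩ : ℕ) := by
    intro t h; rw [hg]; simp only [dif_pos h]
  have hglt : ∀ t, t < s → g t < n := by
    intro t h; rw [hgval t h]; exact (σ ⟨t, h⟩).isLt
  have hgmono : ∀ t u, t < u → u < s → g t < g u := by
    intro t u htu hu
    rw [hgval t (htu.trans hu), hgval u hu]
    exact σ.strictMono (show (⟨t, htu.trans hu⟩ : Fin s) < ⟨u, hu⟩ from htu)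
  have hgstep : ∀ (d j : ℕ), j + d < s → g j + d ≤ g (j + d) := by
    intro d
    induction d with
    | zero => intro j _; simp
    | succ d ihd =>
      intro j h
      have h1 := ihd j (by omega)
      have h2 := hgmono (j + d) (j + d + 1) (by omega) (by omega)
      have e : j + (d + 1) = (j + d) + 1 := by omega
      rw [e]
      omega
  have hgge : ∀ t, t < s → t ≤ g t := by
    intro t h
    have h2 := hgstep t 0 (by omega)
    simp only [Nat.zero_add] at h2
    omega
  -- counting lemma: late elements of S are large
  have hcount : ∀ j, s - r + b ≤ j → j < s → r * k + b ≤ g j := by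
    intro j hjb hj
    by_contra hlt
    push_neg at hlt
    have hinj2 : Function.Injective (fun t : Fin (j + 1) => σ ⟨(t : ℕ), by omega⟩) := by
      intro t u h
      have h2 : ((⟨(t : ℕ), by omega⟩ : Fin s) : ℕ) = ((⟨(u : ℕ), by omega⟩ : Fin s) : ℕ) :=
        congrArg Fin.val (σ.injective h)
      exact Fin.ext h2
    have hI : ((Finset.univ : Finset (Fin (j + 1))).image
        (fun t : Fin (j + 1) => σ ⟨(t : ℕ), by omega⟩)) ⊆
        S.filter (fun x : Fin n => (x : ℕ) < r * k + b) := by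
      intro y hy
      obtain ⟨t, _, rfl⟩ := Finset.mem_image.mp hy
      refine Finset.mem_filter.mpr ⟨Finset.orderEmbOfFin_mem S hScard _, ?_⟩
      have hmono : (σ ⟨(t : ℕ), by omega⟩ : ℕ) ≤ (σ ⟨j, hj⟩ : ℕ) := by
        have h3 : (⟨(t : ℕ), by omega⟩ : Fin s) ≤ ⟨j, hj⟩ := by
          rw [Fin.mk_le_mk]; omega
        exact σ.monotone h3
      have h4 := hgval j hj
      omega
    have hIcard : ((Finset.univ : Finset (Fin (j + 1))).image
        (fun t : Fin (j + 1) => σ ⟨(t : ℕ), by omega⟩)).card = j + 1 := by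
      rw [Finset.card_image_of_injective _ hinj2, Finset.card_univ, Fintype.card_fin]
    have h5 := Finset.card_le_card hI
    omega
  -- n is large
  have hn' : r * k + r ≤ n := by
    have h2 := hgstep (r - 1 - b) (s - r + b) (by omega)
    have h3 := hcount (s - r + b) le_rfl (by omega)
    have h4 : s - r + b + (r - 1 - b) = s - 1 := by omega
    rw [h4] at h2
    have h5 := hglt (s - 1) (by omega)
    omega
  -- the k+1 disjoint arithmetic-progression edges
  have hAel : ∀ (m : Fin (k + 1)) (i : Fin r), (m : ℕ) + (i : ℕ) * (k + 1) < n := by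
    intro m i
    have h1 : (i : ℕ) * (k + 1) ≤ (r - 1) * (k + 1) :=
      Nat.mul_le_mul_right _ (by omega)
    have h2 : (r - 1 + 1) * (k + 1) = (r - 1) * (k + 1) + (k + 1) := by ring
    have h3 : r - 1 + 1 = r := by omega
    have h4 : r * (k + 1) = r * k + r := by ring
    rw [h3, h4] at h2
    have h5 := m.isLt
    omega
  set Aset : Fin (k + 1) → Finset (Fin n) := fun m =>
    Finset.image (fun i : Fin r => (⟨(m : ℕ) + (i : ℕ) * (k + 1), hAel m i⟩ : Fin n))
      Finset.univ with hAset
  have hAinj0 : ∀ m : Fin (k + 1), Function.Injective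
      (fun i : Fin r => (⟨(m : ℕ) + (i : ℕ) * (k + 1), hAel m i⟩ : Fin n)) := by
    intro m i i' h
    have h1 : (m : ℕ) + (i : ℕ) * (k + 1) = (m : ℕ) + (i' : ℕ) * (k + 1) :=
      congrArg Fin.val h
    have h2 : (i : ℕ) * (k + 1) = (i' : ℕ) * (k + 1) := by omega
    exact Fin.ext (Nat.eq_of_mul_eq_mul_right (by omega) h2)
  have hAcard : ∀ m : Fin (k + 1), (Aset m).card = r := by
    intro m
    rw [hAset]
    rw [Finset.card_image_of_injective _ (hAinj0 m), Finset.card_univ, Fintype.card_fin]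
  set φm : Fin (k + 1) → Fin n → Fin n := fun m x =>
    if h : s - r + (x : ℕ) / (k + 1) < s
    then (⟨g (s - r + (x : ℕ) / (k + 1)), hglt _ h⟩ : Fin n) else x with hφm
  have hts : ∀ i : Fin r, s - r + (i : ℕ) < s := by
    intro i; have := i.isLt; omega
  have hdivm : ∀ (m : Fin (k + 1)) (i : Fin r),
      ((m : ℕ) + (i : ℕ) * (k + 1)) / (k + 1) = (i : ℕ) := by
    intro m i
    rw [Nat.add_mul_div_right _ _ (by omega : 0 < k + 1), Nat.div_eq_of_lt m.isLt,
      Nat.zero_add]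
  have hφval : ∀ (m : Fin (k + 1)) (i : Fin r),
      φm m ⟨(m : ℕ) + (i : ℕ) * (k + 1), hAel m i⟩ =
        ⟨g (s - r + (i : ℕ)), hglt _ (hts i)⟩ := by
    intro m i
    simp only [hφm]
    simp only [hdivm m i]
    rw [dif_pos (hts i)]
  have hgmem : ∀ (t : ℕ) (h : t < s), (⟨g t, hglt t h⟩ : Fin n) ∈ S := by
    intro t h
    have he : (⟨g t, hglt t h⟩ : Fin n) = σ ⟨t, h⟩ := Fin.ext (hgval t h)
    rw [he, hσ]
    exact Finset.orderEmbOfFin_mem S hScard _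
  have hbound : ∀ (m : Fin (k + 1)) (i : Fin r),
      (m : ℕ) + (i : ℕ) * (k + 1) ≤ g (s - r + (i : ℕ)) := by
    intro m i
    have h2 : (i : ℕ) * (k + 1) = (i : ℕ) * k + (i : ℕ) := by ring
    have h8 := m.isLt
    have h9 := i.isLt
    by_cases hib : (i : ℕ) < b
    · have h1 := hgge (s - r + (i : ℕ)) (hts i)
      have h3 : (i : ℕ) * k ≤ (b - 1) * k := Nat.mul_le_mul_right _ (by omega)
      have h4 : (b - 1 + 1) * k = (b - 1) * k + k := by ring
      have h5 : b - 1 + 1 = b := by omega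
      rw [h5] at h4
      omega
    · have h1 := hcount (s - r + b) le_rfl (by omega)
      have hstep2 := hgstep ((i : ℕ) - b) (s - r + b) (by omega)
      have h3 : s - r + b + ((i : ℕ) - b) = s - r + (i : ℕ) := by omega
      rw [h3] at hstep2
      have h5 : (i : ℕ) * k ≤ (r - 1) * k := Nat.mul_le_mul_right _ (by omega)
      have h6 : (r - 1 + 1) * k = (r - 1) * k + k := by ring
      have h7 : r - 1 + 1 = r := by omega
      rw [h7] at h6
      omega
  have hAmem : ∀ m : Fin (k + 1), Aset m ∈ H := by
    intro m
    have hinjA : Set.InjOn (φm m) ↑(Aset m) := by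
      intro x hx y hy hxy
      rw [Finset.mem_coe, hAset, Finset.mem_image] at hx hy
      obtain ⟨i, _, rfl⟩ := hx
      obtain ⟨i', _, rfl⟩ := hy
      rw [hφval m i, hφval m i'] at hxy
      have hval : g (s - r + (i : ℕ)) = g (s - r + (i' : ℕ)) := congrArg Fin.val hxy
      have hii : (i : ℕ) = (i' : ℕ) := by
        by_contra hne
        rcases Nat.lt_or_ge (i : ℕ) (i' : ℕ) with h | h
        · have := hgmono (s - r + (i : ℕ)) (s - r + (i' : ℕ)) (by omega) (hts i')
          omega
        · have := hgmono (s - r + (i' : ℕ)) (s - r + (i : ℕ)) (by omega) (hts i)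
          omega
      simp [hii]
    have hFS : (Aset m).image (φm m) ⊆ S := by
      intro y hy
      obtain ⟨x, hx, rfl⟩ := Finset.mem_image.mp hy
      rw [hAset, Finset.mem_image] at hx
      obtain ⟨i, _, rfl⟩ := hx
      rw [hφval m i]
      exact hgmem (s - r + (i : ℕ)) (hts i)
    have hFcard : ((Aset m).image (φm m)).card = r := by
      rw [Finset.card_image_of_injOn hinjA, hAcard]
    have hFH : (Aset m).image (φm m) ∈ H :=
      hScl (Finset.mem_powersetCard.mpr ⟨hFS, hFcard⟩)
    refine compress hstable _ (Aset m) ((Aset m).image (φm m)) (φm m) hFH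
      (by rw [hFcard, hAcard]) (fun x hx => Finset.mem_image_of_mem _ hx) hinjA ?_ rfl
    intro x hx
    rw [hAset, Finset.mem_image] at hx
    obtain ⟨i, _, rfl⟩ := hx
    rw [hφval m i]
    exact Fin.mk_le_mk.mpr (hbound m i)
  have hres : ∀ (m : Fin (k + 1)) (x : Fin n), x ∈ Aset m → (x : ℕ) % (k + 1) = (m : ℕ) := by
    intro m x hx
    rw [hAset, Finset.mem_image] at hx
    obtain ⟨i, _, rfl⟩ := hx
    simp only []
    rw [Nat.add_mul_mod_self_right, Nat.mod_eq_of_lt m.isLt]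
  have hAne : ∀ m : Fin (k + 1),
      (⟨(m : ℕ) + ((⟨0, hr0⟩ : Fin r) : ℕ) * (k + 1), hAel m ⟨0, hr0⟩⟩ : Fin n) ∈ Aset m := by
    intro m
    rw [hAset]
    exact Finset.mem_image_of_mem _ (Finset.mem_univ _)
  have hAinj : Function.Injective Aset := by
    intro m m' h
    have h1 := hAne m
    rw [h] at h1
    have h2 := hres m' _ h1
    simp only [Fin.val_mk, Nat.zero_mul, Nat.add_zero] at h2
    rw [Nat.mod_eq_of_lt m.isLt] at h2
    exact Fin.ext h2
  set M := (Finset.univ : Finset (Fin (k + 1))).image Aset with hM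
  have hMH : M ⊆ H := by
    intro A hA
    rw [hM, Finset.mem_image] at hA
    obtain ⟨m, _, rfl⟩ := hA
    exact hAmem m
  have hpair : (↑M : Set (Finset (Fin n))).Pairwise Disjoint := by
    intro A hA B hB hne
    rw [Finset.mem_coe, hM, Finset.mem_image] at hA hB
    obtain ⟨m, _, rfl⟩ := hA
    obtain ⟨m', _, rfl⟩ := hB
    refine Finset.disjoint_left.mpr ?_
    intro x hxA hxB
    have e1 := hres m x hxA
    have e2 := hres m' x hxB
    exact hne (congrArg Aset (Fin.ext (by omega)))
  have hMcard : M.card = k + 1 := by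
    rw [hM, Finset.card_image_of_injective _ hAinj, Finset.card_univ, Fintype.card_fin]
  have hfin := hmatch M hMH hpair
  omega
end

section
/- Let n, k, r, a be positive integers with a < r and rk ≤ n, and let H be an r-graph on a vertex set V of n vertices. Suppose A_1, A_2, …, A_k are pairwise disjoint a-element subsets of V such that deg_H(A_i) > r(k−1)·C(n−a−1, r−a−1) for every i. Then H contains a matching of size k; in fact, there exist pairwise disjoint edges E_1, …, E_k of H with A_i ⊆ E_i for each i. -/
open Finset

lemma deg_pair_le {V : Type*} [Fintype V] [DecidableEq V] {n r a : ℕ}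
    (hcard : Fintype.card V = n)
    (H : Finset (Finset V)) (hunif : ∀ E ∈ H, E.card = r)
    {A : Finset V} (hA : A.card = a) {v : V} (hv : v ∉ A) :
    (H.filter (fun E => A ⊆ E ∧ v ∈ E)).card ≤ Nat.choose (n - a - 1) (r - a - 1) := by
  have hins : (insert v A).card = a + 1 := by rw [Finset.card_insert_of_notMem hv, hA]
  have htarget : ((Finset.univ \ insert v A).powersetCard (r - a - 1)).card
      = Nat.choose (n - a - 1) (r - a - 1) := by
    rw [Finset.card_powersetCard, Finset.card_sdiff_of_subset (Finset.subset_univ _), hins,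
      Finset.card_univ, hcard, Nat.sub_sub, Nat.sub_sub]
  rw [← htarget]
  apply Finset.card_le_card_of_injOn (fun E => E \ insert v A)
  · intro E hE
    simp only [Finset.mem_coe, Finset.mem_filter] at hE
    obtain ⟨hEH, hAE, hvE⟩ := hE
    have hsub : insert v A ⊆ E := Finset.insert_subset hvE hAE
    simp only [Finset.mem_coe, Finset.mem_powersetCard]
    constructor
    · exact Finset.sdiff_subset_sdiff (Finset.subset_univ _) le_rfl
    · rw [Finset.card_sdiff_of_subset hsub, hunif E hEH, hins, Nat.sub_sub]
  · intro E₁ h₁ E₂ h₂ heq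
    simp only [Finset.coe_filter, Set.mem_setOf_eq] at h₁ h₂
    have hs₁ : insert v A ⊆ E₁ := Finset.insert_subset h₁.2.2 h₁.2.1
    have hs₂ : insert v A ⊆ E₂ := Finset.insert_subset h₂.2.2 h₂.2.1
    calc E₁ = E₁ \ insert v A ∪ insert v A := (Finset.sdiff_union_of_subset hs₁).symm
    _ = E₂ \ insert v A ∪ insert v A := by simp only at heq; rw [heq]
    _ = E₂ := Finset.sdiff_union_of_subset hs₂

lemma good_edge {V : Type*} [Fintype V] [DecidableEq V] {n r a : ℕ}
    (hcard : Fintype.card V = n)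
    (H : Finset (Finset V)) (hunif : ∀ E ∈ H, E.card = r)
    {A B : Finset V} (hA : A.card = a) (hAB : Disjoint A B)
    (hdeg : B.card * Nat.choose (n - a - 1) (r - a - 1) < degOf H A) :
    ∃ E ∈ H, A ⊆ E ∧ Disjoint E B := by
  by_contra h
  push_neg at h
  have hsub : H.filter (fun E => A ⊆ E) ⊆
      B.biUnion (fun v => H.filter (fun E => A ⊆ E ∧ v ∈ E)) := by
    intro E hE
    simp only [Finset.mem_filter] at hE
    obtain ⟨v, hvE, hvB⟩ := Finset.not_disjoint_iff.mp (h E hE.1 hE.2)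
    exact Finset.mem_biUnion.mpr ⟨v, hvB, Finset.mem_filter.mpr ⟨hE.1, hE.2, hvE⟩⟩
  have : degOf H A ≤ B.card * Nat.choose (n - a - 1) (r - a - 1) := by
    calc degOf H A ≤ (B.biUnion (fun v => H.filter (fun E => A ⊆ E ∧ v ∈ E))).card :=
          Finset.card_le_card hsub
    _ ≤ ∑ v ∈ B, (H.filter (fun E => A ⊆ E ∧ v ∈ E)).card := Finset.card_biUnion_le
    _ ≤ ∑ _v ∈ B, Nat.choose (n - a - 1) (r - a - 1) := by
        apply Finset.sum_le_sum
        intro v hvB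
        exact deg_pair_le hcard H hunif hA (fun hvA => (Finset.disjoint_left.mp hAB) hvA hvB)
    _ = B.card * Nat.choose (n - a - 1) (r - a - 1) := by rw [Finset.sum_const, smul_eq_mul]
  omega

/-- Lemma 3.3 (greedy matching through prescribed `a`-sets). -/
theorem matching_of_large_degrees {V : Type*} [Fintype V] [DecidableEq V] {n k r a : ℕ}
    (hn0 : 0 < n) (hk0 : 0 < k) (hr0 : 0 < r) (ha0 : 0 < a)
    (har : a < r) (hrk : r * k ≤ n)
    (hcard : Fintype.card V = n)
    (H : Finset (Finset V)) (hunif : ∀ E ∈ H, E.card = r)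
    (A : Fin k → Finset V) (hA : ∀ i, (A i).card = a)
    (hdisj : ∀ i j, i ≠ j → Disjoint (A i) (A j))
    (hdeg : ∀ i, r * (k - 1) * Nat.choose (n - a - 1) (r - a - 1) < degOf H (A i)) :
    ∃ E : Fin k → Finset V, (∀ i, E i ∈ H) ∧ (∀ i, A i ⊆ E i) ∧
      ∀ i j, i ≠ j → Disjoint (E i) (E j) := by
  have key : ∀ m : ℕ, m ≤ k → ∃ E : Fin k → Finset V,
      ∀ i : Fin k, (i : ℕ) < m → E i ∈ H ∧ A i ⊆ E i ∧
        (∀ j : Fin k, j ≠ i → Disjoint (E i) (A j)) ∧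
        (∀ j : Fin k, (j : ℕ) < m → j ≠ i → Disjoint (E i) (E j)) := by
    intro m
    induction m with
    | zero => exact fun _ => ⟨fun _ => ∅, fun i hi => absurd hi (by omega)⟩
    | succ m ih =>
      intro hm1
      obtain ⟨E, hE⟩ := ih (by omega)
      have hmk : m < k := hm1
      set im : Fin k := ⟨m, hmk⟩ with him
      set B : Finset V := (Finset.Iio im).biUnion E ∪ (Finset.Ioi im).biUnion A with hB
      -- disjointness of A im with B
      have hABd : Disjoint (A im) B := by
        rw [hB, Finset.disjoint_union_right]
        constructor
        · rw [Finset.disjoint_biUnion_right]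
          intro j hj
          rw [Finset.mem_Iio] at hj
          have := (hE j (by exact_mod_cast hj)).2.2.1 im (by
            intro h; rw [h] at hj; exact lt_irrefl _ hj)
          exact this.symm
        · rw [Finset.disjoint_biUnion_right]
          intro j hj
          rw [Finset.mem_Ioi] at hj
          exact hdisj im j (fun h => by rw [h] at hj; exact lt_irrefl _ hj)
      -- cardinality bound
      have hBcard : B.card ≤ r * (k - 1) := by
        calc B.card ≤ ((Finset.Iio im).biUnion E).card + ((Finset.Ioi im).biUnion A).card :=
            Finset.card_union_le _ _
        _ ≤ (∑ j ∈ Finset.Iio im, (E j).card) + ∑ j ∈ Finset.Ioi im, (A j).card := by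
            exact Nat.add_le_add Finset.card_biUnion_le Finset.card_biUnion_le
        _ ≤ (∑ _j ∈ Finset.Iio im, r) + ∑ _j ∈ Finset.Ioi im, a := by
            apply Nat.add_le_add
            · apply Finset.sum_le_sum
              intro j hj
              rw [Finset.mem_Iio] at hj
              exact le_of_eq (hunif _ (hE j (by exact_mod_cast hj)).1)
            · exact Finset.sum_le_sum fun j _ => le_of_eq (hA j)
        _ = m * r + (k - 1 - m) * a := by
            rw [Finset.sum_const, Finset.sum_const, Fin.card_Iio, Fin.card_Ioi,
              smul_eq_mul, smul_eq_mul]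
        _ ≤ m * r + (k - 1 - m) * r := by
            exact Nat.add_le_add_left (Nat.mul_le_mul_left _ (le_of_lt har)) _
        _ = (m + (k - 1 - m)) * r := by ring
        _ ≤ (k - 1) * r := Nat.mul_le_mul_right _ (by omega)
        _ = r * (k - 1) := Nat.mul_comm _ _
      obtain ⟨E', hE'H, hAE', hE'B⟩ := good_edge hcard H hunif (hA im) hABd
        (lt_of_le_of_lt (Nat.mul_le_mul_right _ hBcard) (hdeg im))
      refine ⟨Function.update E im E', ?_⟩
      intro i hi
      by_cases hiim : i = im
      · subst hiim
        rw [Function.update_self]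
        refine ⟨hE'H, hAE', ?_, ?_⟩
        · intro j hj
          apply Finset.disjoint_of_subset_right _ hE'B
          rcases lt_or_gt_of_ne (fun h : (j:ℕ) = (im:ℕ) => hj (Fin.ext h)) with h | h
          · -- j < m so A j ⊆ E j ⊆ B
            exact Finset.Subset.trans (hE j h).2.1 (Finset.Subset.trans
              (Finset.subset_biUnion_of_mem E (Finset.mem_Iio.mpr (by exact_mod_cast h)))
              Finset.subset_union_left)
          · exact Finset.Subset.trans
              (Finset.subset_biUnion_of_mem A (Finset.mem_Ioi.mpr (by exact_mod_cast h)))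
              Finset.subset_union_right
        · intro j hj hji
          have hjm : (j : ℕ) < m := by
            rcases Nat.lt_succ_iff_lt_or_eq.mp hj with h | h
            · exact h
            · exact absurd (Fin.ext h) hji
          rw [Function.update_of_ne hji]
          apply Finset.disjoint_of_subset_right _ hE'B
          exact Finset.Subset.trans
            (Finset.subset_biUnion_of_mem E (Finset.mem_Iio.mpr (by exact_mod_cast hjm)))
            Finset.subset_union_left
      · have him' : (i : ℕ) < m := by
          rcases Nat.lt_succ_iff_lt_or_eq.mp hi with h | h
          · exact h
          · exact absurd (Fin.ext h) hiim
        rw [Function.update_of_ne hiim]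
        obtain ⟨h1, h2, h3, h4⟩ := hE i him'
        refine ⟨h1, h2, h3, ?_⟩
        intro j hj hji
        by_cases hjim : j = im
        · subst hjim
          rw [Function.update_self]
          exact (Finset.disjoint_of_subset_right (Finset.Subset.trans
            (Finset.subset_biUnion_of_mem E (Finset.mem_Iio.mpr (by exact_mod_cast him')))
            Finset.subset_union_left) hE'B).symm
        · have hjm : (j : ℕ) < m := by
            rcases Nat.lt_succ_iff_lt_or_eq.mp hj with h | h
            · exact h
            · exact absurd (Fin.ext h) hjim
          rw [Function.update_of_ne hjim]
          exact h4 j hjm hji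
  obtain ⟨E, hE⟩ := key k le_rfl
  refine ⟨E, fun i => (hE i i.isLt).1, fun i => (hE i i.isLt).2.1, fun i j hij =>
    (hE i i.isLt).2.2.2 j j.isLt (Ne.symm hij)⟩
end

section
/- Let k, r, s be positive integers with r ≤ s ≤ (r−1)(k+1), set a = ⌊(s−r)/k⌋ + 1 (so a ≤ r−1), and define the real number n*(k,r,s) = (r/a)^{(s−r+a)/(r−a)} · ((rk+r−1−s)/s). Then for every integer n with s ≤ n ≤ n*(k,r,s), one has K_s^r(F^{(r)}_{n,k,a}) < C(rk+r−1, s). -/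
open Finset

lemma aux_pow_choose (a r k : ℕ) (ha1 : 1 ≤ a) (har : a ≤ r) :
    ∀ j, r ^ j * Nat.choose (a*k+a-1) j ≤ a ^ j * Nat.choose (r*k+r-1) j := by
  set m := a*k+a-1 with hm
  set M := r*k+r-1 with hM
  have hm1 : m + 1 = a*k + a :=
    Nat.sub_add_cancel (ha1.trans (Nat.le_add_left a (a*k)))
  have hM1 : M + 1 = r*k + r :=
    Nat.sub_add_cancel ((ha1.trans har).trans (Nat.le_add_left r (r*k)))
  have hid : a*M + a = r*m + r := by
    rw [show a*M+a = a*(M+1) by ring, show r*m+r = r*(m+1) by ring, hm1, hM1]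
    ring
  intro j
  induction j with
  | zero => simp
  | succ j ih =>
    have key : r * (m - j) ≤ a * (M - j) := by
      rcases le_or_gt j m with hjm | hjm
      · have hmM : m ≤ M := by nlinarith
        have hjM : j ≤ M := hjm.trans hmM
        zify [hjm, hjM]
        have hj : (0:ℤ) ≤ j := by positivity
        have h3 : (a:ℤ) * j ≤ r * j :=
          mul_le_mul_of_nonneg_right (by exact_mod_cast har) hj
        have hid' : (a:ℤ)*M + a = r*m + r := by exact_mod_cast hid
        linarith
      · rw [Nat.sub_eq_zero_of_le hjm.le, Nat.mul_zero]
        exact Nat.zero_le _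
    refine Nat.le_of_mul_le_mul_right ?_ (Nat.succ_pos j)
    have e1 : r^(j+1) * Nat.choose m (j+1) * (j+1)
        = (r^j * Nat.choose m j) * (r * (m - j)) := by
      rw [mul_assoc, Nat.choose_succ_right_eq]; ring
    have e2 : a^(j+1) * Nat.choose M (j+1) * (j+1)
        = (a^j * Nat.choose M j) * (a * (M - j)) := by
      rw [mul_assoc, Nat.choose_succ_right_eq]; ring
    rw [e1, e2]
    exact Nat.mul_le_mul ih key

lemma aux_count (n k r a s b : ℕ) (ha1 : 1 ≤ a) (hab : a + b = r) (hrs : r ≤ s)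
    (hsn : s ≤ n) :
    cliqueCount r s (Fnka n k r a) ≤
      Nat.choose (a*k+a-1) (s-b) * Nat.choose n b := by
  classical
  set m := a*k+a-1 with hm
  set sb := s - b with hsbdef
  set B : Finset (Fin n) := univ.filter (fun x : Fin n => (x : ℕ) < m) with hB
  have hbs : b ≤ s := by omega
  have hBcard : B.card ≤ m := by
    calc B.card = (B.image Fin.val).card :=
          (card_image_of_injective _ Fin.val_injective).symm
    _ ≤ (range m).card := by
          apply card_le_card
          intro x hx
          obtain ⟨y, hy, rfl⟩ := mem_image.mp hx
          simp only [hB, mem_filter] at hy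
          exact mem_range.mpr hy.2
    _ = m := card_range m
  set X := (Finset.univ.powersetCard s).filter
      (fun S : Finset (Fin n) => S.powersetCard r ⊆ Fnka n k r a) with hX
  have hkey : ∀ S ∈ X, sb ≤ (S ∩ B).card := by
    intro S hS
    obtain ⟨hS1, hS2⟩ := mem_filter.mp hS
    have hcard : S.card = s := (mem_powersetCard.mp hS1).2
    by_contra hcon
    push_neg at hcon
    have hsplit := card_inter_add_card_sdiff S B
    have hd : b + 1 ≤ (S \ B).card := by omega
    obtain ⟨C, hCsub, hCcard⟩ := exists_subset_card_eq hd
    have hCS : C ⊆ S := hCsub.trans sdiff_subset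
    obtain ⟨R, hCR, hRS, hRcard⟩ := exists_subsuperset_card_eq (n := r - (b+1) + C.card)
      hCS (by omega) (by rw [hCcard, hcard]; omega)
    have hRcard' : R.card = r := by rw [hRcard, hCcard]; omega
    have hRmem : R ∈ Fnka n k r a := hS2 (mem_powersetCard.mpr ⟨hRS, hRcard'⟩)
    have hRa : a ≤ (R.filter (fun x : Fin n => (x : ℕ) < m)).card :=
      (mem_filter.mp hRmem).2
    have hfilter : R.filter (fun x : Fin n => (x : ℕ) < m) = R ∩ B := by
      ext x
      simp [hB, mem_filter, mem_inter, and_assoc]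
    rw [hfilter] at hRa
    have hdisj : Disjoint (R ∩ B) C := by
      rw [disjoint_left]
      intro x hx hxC
      exact (mem_sdiff.mp (hCsub hxC)).2 (mem_inter.mp hx).2
    have hun : (R ∩ B).card + C.card ≤ R.card := by
      rw [← card_union_of_disjoint hdisj]
      exact card_le_card (union_subset inter_subset_left hCR)
    omega
  set g : Finset (Fin n) → Finset (Fin n) :=
    fun T => if h : sb ≤ T.card then (exists_subset_card_eq h).choose else ∅ with hgdef
  have hg : ∀ T : Finset (Fin n), sb ≤ T.card → g T ⊆ T ∧ (g T).card = sb := by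
    intro T h
    simp only [hgdef, dif_pos h]
    obtain ⟨h1, h2⟩ := (exists_subset_card_eq h).choose_spec
    exact ⟨h1, h2⟩
  have hcount : cliqueCount r s (Fnka n k r a) = X.card := rfl
  rw [hcount]
  have hmain : X.card ≤ ((B.powersetCard sb) ×ˢ ((univ : Finset (Fin n)).powersetCard b)).card := by
    apply card_le_card_of_injOn (fun S => (g (S ∩ B), S \ g (S ∩ B)))
    · intro S hS
      obtain ⟨hA_sub, hA_card⟩ := hg (S ∩ B) (hkey S hS)
      have hAS : g (S ∩ B) ⊆ S := hA_sub.trans inter_subset_left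
      have hScard : S.card = s := (mem_powersetCard.mp (mem_filter.mp hS).1).2
      rw [mem_coe, mem_product]
      constructor
      · exact mem_powersetCard.mpr ⟨hA_sub.trans inter_subset_right, hA_card⟩
      · refine mem_powersetCard.mpr ⟨subset_univ _, ?_⟩
        rw [card_sdiff_of_subset hAS, hScard, hA_card]
        omega
    · intro S1 h1 S2 h2 heq
      simp only [Prod.mk.injEq] at heq
      obtain ⟨heqA, heqD⟩ := heq
      have hA1 : g (S1 ∩ B) ⊆ S1 := (hg _ (hkey S1 h1)).1.trans inter_subset_left
      have hA2 : g (S2 ∩ B) ⊆ S2 := (hg _ (hkey S2 h2)).1.trans inter_subset_left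
      calc S1 = S1 \ g (S1 ∩ B) ∪ g (S1 ∩ B) := (sdiff_union_of_subset hA1).symm
      _ = S2 \ g (S2 ∩ B) ∪ g (S2 ∩ B) := by rw [heqD, heqA]
      _ = S2 := sdiff_union_of_subset hA2
  refine hmain.trans ?_
  rw [card_product, card_powersetCard, card_powersetCard, card_univ, Fintype.card_fin]
  exact Nat.mul_le_mul_right _ (Nat.choose_le_choose sb hBcard)

/-- for `n` below the threshold `n*(k,r,s)`, the construction
`F^{(r)}_{n,k,a}` has fewer `s`-cliques than `F^{(r)}_{n,k,r}`. -/
theorem cliqueCount_Fnka_lt_of_small_n {k r s a : ℕ}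
    (hk0 : 0 < k) (hr0 : 0 < r) (hs0 : 0 < s)
    (hrs : r ≤ s) (hs2 : s ≤ (r - 1) * (k + 1))
    (ha : a = (s - r) / k + 1)
    (n : ℕ) (hsn : s ≤ n)
    (hn : (n : ℝ) ≤ ((r : ℝ) / (a : ℝ)) ^ ((((s : ℝ) - r + a)) / ((r : ℝ) - a)) *
      (((r : ℝ) * k + r - 1 - s) / s)) :
    cliqueCount r s (Fnka n k r a) < Nat.choose (r * k + r - 1) s := by
  classical
  -- basic integer facts
  have hr2 : 2 ≤ r := by
    by_contra h
    interval_cases r <;> simp_all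
  have hp1 : 1 ≤ (r-1)*k := Nat.mul_pos (by omega) hk0
  have hs2' : s ≤ (r-1)*k + (r-1) := by rwa [Nat.mul_succ] at hs2
  have hdiv : (s - r)/k < r - 1 := by
    rw [Nat.div_lt_iff_lt_mul hk0]
    have : s - r + r ≤ (r-1)*k + (r-1) := by
      rw [Nat.sub_add_cancel hrs]; exact hs2'
    omega
  generalize hq : (s - r)/k = q at ha hdiv
  have ha1 : 1 ≤ a := by omega
  have har : a + 1 ≤ r := by omega
  set b := r - a with hbdef
  set sb := s - b with hsbdef
  set m := a*k+a-1 with hmdef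
  set M := r*k+r-1 with hMdef
  have hab : a + b = r := by omega
  have hb1 : 1 ≤ b := by omega
  have hbs : b + 1 ≤ s := by omega
  have hsbb : sb + b = s := by omega
  have hsb1 : 1 ≤ sb := by omega
  have hM1 : M + 1 = r*k + r :=
    Nat.sub_add_cancel ((by omega : 1 ≤ r).trans (Nat.le_add_left r (r*k)))
  have hsM : s + k ≤ M := by
    have h1 : s + k ≤ ((r-1)*k + (r-1)) + k := by omega
    have h2 : ((r-1)*k + (r-1)) + k + 1 = r*k + r := by
      have : (r-1)*k + k = r*k := by
        obtain ⟨r', rfl⟩ : ∃ r', r = r'+1 := ⟨r-1, by omega⟩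
        simp [Nat.succ_sub_one]; ring
      omega
    omega
  have hsM' : s < M := by omega
  -- step 1 : combinatorial bound
  have hstep1 : cliqueCount r s (Fnka n k r a) ≤
      Nat.choose m sb * Nat.choose n b := aux_count n k r a s b ha1 hab hrs hsn
  -- step 2 : numeric facts in ℕ
  have hB1 : r ^ sb * Nat.choose m sb ≤ a ^ sb * Nat.choose M sb :=
    aux_pow_choose a r k ha1 (by omega) sb
  have hid : Nat.choose M s * Nat.choose s sb
      = Nat.choose M sb * Nat.choose (M - sb) b := by
    have := Nat.choose_mul (n := M) (k := s) (s := sb) (by omega)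
    rwa [show s - sb = b by omega] at this
  have hsymm : Nat.choose s sb = Nat.choose s b := by
    rw [hsbdef]; exact Nat.choose_symm (by omega)
  clear_value b sb m M
  -- the strict product inequality
  have star : Nat.choose n b * Nat.choose s b * (M-s)^b
      < n^b * s^b * Nat.choose (M - sb) b := by
    have hprod : ∏ j ∈ range b, ((n-j)*(s-j)*(M-s))
        < ∏ j ∈ range b, (n*s*((b-j)*(M-sb-j))) := by
      apply Finset.prod_lt_prod_of_nonempty
      · intro j hj
        rw [mem_range] at hj
        have : 0 < n - j := by omega
        have : 0 < s - j := by omega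
        have : 0 < M - s := by omega
        positivity
      · intro j hj
        rw [mem_range] at hj
        have f1 : (n-j)*(s-j) ≤ n*s := Nat.mul_le_mul (Nat.sub_le n j) (Nat.sub_le s j)
        have f2 : M - s < (b-j)*(M-sb-j) := by
          have h1 : M - s + 1 ≤ M - sb - j := by omega
          have h2 : 1 ≤ b - j := by omega
          calc M - s < M - s + 1 := Nat.lt_succ_self _
          _ ≤ M - sb - j := h1
          _ ≤ (b-j)*(M-sb-j) := Nat.le_mul_of_pos_left _ (by omega)
        calc (n-j)*(s-j)*(M-s) ≤ n*s*(M-s) := Nat.mul_le_mul_right _ f1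
        _ < n*s*((b-j)*(M-sb-j)) :=
            mul_lt_mul_of_pos_left f2 (Nat.mul_pos (by omega) (by omega))
      · exact nonempty_range_iff.mpr (by omega)
    have e1 : ∏ j ∈ range b, (n - j) = (Nat.factorial b) * Nat.choose n b := by
      rw [← Nat.descFactorial_eq_prod_range, Nat.descFactorial_eq_factorial_mul_choose]
    have e2 : ∏ j ∈ range b, (s - j) = (Nat.factorial b) * Nat.choose s b := by
      rw [← Nat.descFactorial_eq_prod_range, Nat.descFactorial_eq_factorial_mul_choose]
    have e3 : ∏ j ∈ range b, (M - sb - j) = (Nat.factorial b) * Nat.choose (M - sb) b := by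
      rw [← Nat.descFactorial_eq_prod_range, Nat.descFactorial_eq_factorial_mul_choose]
    have e4 : ∏ j ∈ range b, (b - j) = (Nat.factorial b) := by
      rw [← Nat.descFactorial_eq_prod_range, Nat.descFactorial_self]
    simp only [prod_mul_distrib, prod_const, card_range] at hprod
    rw [e1, e2, e3, e4] at hprod
    refine Nat.lt_of_mul_lt_mul_left (a := (Nat.factorial b) * (Nat.factorial b)) ?_
    calc (Nat.factorial b) * (Nat.factorial b) * (Nat.choose n b * Nat.choose s b * (M-s)^b)
        = ((Nat.factorial b) * Nat.choose n b) * ((Nat.factorial b) * Nat.choose s b) * (M-s)^b := by ring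
    _ < n^b * s^b * ((Nat.factorial b) * ((Nat.factorial b) * Nat.choose (M - sb) b)) := hprod
    _ = (Nat.factorial b) * (Nat.factorial b) * (n^b * s^b * Nat.choose (M - sb) b) := by ring
  -- step 3 : the real-number consequence of hn
  have hrpos : (0:ℝ) < r := by exact_mod_cast hr0
  have hapos : (0:ℝ) < a := by exact_mod_cast ha1
  have hspos : (0:ℝ) < s := by exact_mod_cast hs0
  set X : ℝ := (r:ℝ)/(a:ℝ) with hXdef
  have hX0 : (0:ℝ) < X := div_pos hrpos hapos
  have hcast1 : ((s:ℝ) - r + a) = (sb:ℝ) := by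
    have e : sb + r = s + a := by omega
    have := congrArg (fun t : ℕ => (t:ℝ)) e
    push_cast at this; linarith
  have hcast2 : (r:ℝ) - a = (b:ℝ) := by
    have e : b + a = r := by omega
    have := congrArg (fun t : ℕ => (t:ℝ)) e
    push_cast at this; linarith
  have hcast3 : (r:ℝ)*k + r - 1 - s = ((M - s : ℕ):ℝ) := by
    have e : (M - s) + s + 1 = r*k + r := by omega
    have := congrArg (fun t : ℕ => (t:ℝ)) e
    push_cast at this; linarith
  rw [hcast1, hcast2, hcast3] at hn
  set MS := M - s with hMSdef
  have hMSpos : (0:ℝ) < (MS:ℝ) := by exact_mod_cast (by omega : 0 < MS)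
  have hbne : ((b:ℝ)) ≠ 0 := by
    have : (0:ℝ) < b := by exact_mod_cast hb1
    linarith
  have h5 : (n:ℝ) * s ≤ X ^ ((sb:ℝ)/(b:ℝ)) * MS := by
    have := mul_le_mul_of_nonneg_right hn hspos.le
    rwa [mul_assoc, div_mul_cancel₀ _ (ne_of_gt hspos)] at this
  have h7 : (X ^ ((sb:ℝ)/(b:ℝ)))^b = X ^ (sb:ℕ) := by
    rw [← Real.rpow_natCast (X ^ ((sb:ℝ)/(b:ℝ))) b, ← Real.rpow_mul hX0.le,
      div_mul_cancel₀ _ hbne, Real.rpow_natCast]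
  have h6 : ((n:ℝ)*s)^b ≤ X ^ (sb:ℕ) * (MS:ℝ)^b := by
    rw [← h7, ← mul_pow]
    exact pow_le_pow_left₀ (by positivity) h5 b
  have hXpow : (a:ℝ)^sb * X ^ (sb:ℕ) = (r:ℝ)^sb := by
    rw [hXdef, div_pow]
    field_simp
  have hiii : (a:ℝ)^sb * ((n:ℝ)^b * (s:ℝ)^b) ≤ (r:ℝ)^sb * (MS:ℝ)^b := by
    calc (a:ℝ)^sb * ((n:ℝ)^b * (s:ℝ)^b) = (a:ℝ)^sb * ((n:ℝ)*s)^b := by rw [mul_pow]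
    _ ≤ (a:ℝ)^sb * (X ^ (sb:ℕ) * (MS:ℝ)^b) :=
        mul_le_mul_of_nonneg_left h6 (by positivity)
    _ = (r:ℝ)^sb * (MS:ℝ)^b := by rw [← mul_assoc, hXpow]
  -- step 4 : assemble in ℝ
  have hCM1pos : (0:ℝ) < (Nat.choose M sb : ℝ) := by
    exact_mod_cast Nat.choose_pos (by omega : sb ≤ M)
  have hCspos : (0:ℝ) < (Nat.choose s b : ℝ) := by
    exact_mod_cast Nat.choose_pos (by omega : b ≤ s)
  have star' : (Nat.choose n b : ℝ) * Nat.choose s b * (MS:ℝ)^b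
      < (n:ℝ)^b * (s:ℝ)^b * Nat.choose (M - sb) b := by exact_mod_cast star
  have hB1' : (r:ℝ)^sb * Nat.choose m sb ≤ (a:ℝ)^sb * Nat.choose M sb := by
    exact_mod_cast hB1
  have hid' : (Nat.choose M s : ℝ) * Nat.choose s b
      = (Nat.choose M sb : ℝ) * Nat.choose (M - sb) b := by
    rw [← hsymm]; exact_mod_cast hid
  have t1 : (a:ℝ)^sb * ((Nat.choose n b : ℝ) * Nat.choose s b) * (MS:ℝ)^b
      < (r:ℝ)^sb * (Nat.choose (M - sb) b : ℝ) * (MS:ℝ)^b := by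
    calc (a:ℝ)^sb * ((Nat.choose n b : ℝ) * Nat.choose s b) * (MS:ℝ)^b
        = (a:ℝ)^sb * ((Nat.choose n b : ℝ) * Nat.choose s b * (MS:ℝ)^b) := by ring
    _ < (a:ℝ)^sb * ((n:ℝ)^b * (s:ℝ)^b * Nat.choose (M - sb) b) :=
        mul_lt_mul_of_pos_left star' (pow_pos hapos sb)
    _ = ((a:ℝ)^sb * ((n:ℝ)^b * (s:ℝ)^b)) * Nat.choose (M - sb) b := by ring
    _ ≤ ((r:ℝ)^sb * (MS:ℝ)^b) * Nat.choose (M - sb) b :=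
        mul_le_mul_of_nonneg_right hiii (by positivity)
    _ = (r:ℝ)^sb * (Nat.choose (M - sb) b : ℝ) * (MS:ℝ)^b := by ring
  have q1 : (a:ℝ)^sb * ((Nat.choose n b : ℝ) * Nat.choose s b)
      < (r:ℝ)^sb * (Nat.choose (M - sb) b : ℝ) :=
    lt_of_mul_lt_mul_right t1 (by positivity)
  have q2 : (r:ℝ)^sb * ((Nat.choose s b : ℝ) * ((Nat.choose m sb : ℝ) * Nat.choose n b))
      < (r:ℝ)^sb * ((Nat.choose s b : ℝ) * Nat.choose M s) := by
    calc (r:ℝ)^sb * ((Nat.choose s b : ℝ) * ((Nat.choose m sb : ℝ) * Nat.choose n b))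
        = ((r:ℝ)^sb * Nat.choose m sb) * ((Nat.choose n b : ℝ) * Nat.choose s b) := by ring
    _ ≤ ((a:ℝ)^sb * Nat.choose M sb) * ((Nat.choose n b : ℝ) * Nat.choose s b) :=
        mul_le_mul_of_nonneg_right hB1' (by positivity)
    _ = (Nat.choose M sb : ℝ) * ((a:ℝ)^sb * ((Nat.choose n b : ℝ) * Nat.choose s b)) := by
        ring
    _ < (Nat.choose M sb : ℝ) * ((r:ℝ)^sb * Nat.choose (M - sb) b) :=
        mul_lt_mul_of_pos_left q1 hCM1pos
    _ = (r:ℝ)^sb * ((Nat.choose M sb : ℝ) * Nat.choose (M - sb) b) := by ring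
    _ = (r:ℝ)^sb * ((Nat.choose s b : ℝ) * Nat.choose M s) := by rw [← hid']; ring
  have q3 : (Nat.choose s b : ℝ) * ((Nat.choose m sb : ℝ) * Nat.choose n b)
      < (Nat.choose s b : ℝ) * Nat.choose M s :=
    lt_of_mul_lt_mul_left q2 (by positivity)
  have q4 : Nat.choose s b * (Nat.choose m sb * Nat.choose n b)
      < Nat.choose s b * Nat.choose M s := by exact_mod_cast q3
  have q5 : Nat.choose m sb * Nat.choose n b < Nat.choose M s :=
    Nat.lt_of_mul_lt_mul_left q4
  exact lt_of_le_of_lt hstep1 q5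
end

section
/- Let H be an r-graph on n vertices with r ≥ 2 and matching number ν(H) ≤ k, and let u be a vertex of H such that H − u (the subhypergraph induced on V(H)∖{u}) contains a matching of size k. Then the degree of u satisfies deg_H(u) ≤ rk·C(n−2, r−2). -/
open Finset

/-- a vertex whose removal still admits a matching of size `k`
has degree at most `r * k * C(n-2, r-2)`. -/
theorem degree_bound_of_matching_avoiding {V : Type*} [Fintype V] [DecidableEq V] {n k r : ℕ}
    (hr : 2 ≤ r) (hcard : Fintype.card V = n)
    (H : Finset (Finset V)) (hunif : ∀ E ∈ H, E.card = r)
    (hmatch : matchingLE H k)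
    (u : V)
    (hM : ∃ M ⊆ H, (M : Set (Finset V)).Pairwise Disjoint ∧ M.card = k ∧ ∀ E ∈ M, u ∉ E) :
    (H.filter (fun E => u ∈ E)).card ≤ r * k * Nat.choose (n - 2) (r - 2) := by
  obtain ⟨M, hMH, hMdisj, hMcard, hMu⟩ := hM
  set W := M.biUnion id with hW
  have hWcard : W.card ≤ r * k := by
    calc W.card ≤ ∑ e ∈ M, (id e).card := card_biUnion_le
    _ ≤ ∑ _e ∈ M, r := by
        refine Finset.sum_le_sum ?_
        intro e he; rw [id, hunif e (hMH he)]
    _ = r * k := by rw [Finset.sum_const, hMcard, smul_eq_mul, mul_comm]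
  have hsub : H.filter (fun E => u ∈ E) ⊆
      W.biUnion (fun v => H.filter (fun E => u ∈ E ∧ v ∈ E)) := by
    intro E hE
    simp only [mem_filter] at hE
    obtain ⟨hEH, huE⟩ := hE
    by_contra hcon
    simp only [mem_biUnion, mem_filter, not_exists] at hcon
    have hdisj : ∀ e ∈ M, Disjoint e E := by
      intro e he
      rw [Finset.disjoint_left]
      intro v hv hvE
      exact hcon v ⟨mem_biUnion.mpr ⟨e, he, hv⟩, hEH, huE, hvE⟩
    have hEnotM : E ∉ M := fun h => hMu E h huE
    have hle : (insert E M).card ≤ k := by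
      apply hmatch
      · intro x hx; rcases mem_insert.mp hx with rfl | h
        · exact hEH
        · exact hMH h
      · intro x hx y hy hxy
        simp only [coe_insert, Set.mem_insert_iff, mem_coe] at hx hy
        rcases hx with rfl | hx <;> rcases hy with rfl | hy
        · exact absurd rfl hxy
        · exact (hdisj y hy).symm
        · exact hdisj x hx
        · exact hMdisj hx hy hxy
    rw [Finset.card_insert_of_notMem hEnotM, hMcard] at hle
    omega
  have hdeg : ∀ v ∈ W, (H.filter (fun E => u ∈ E ∧ v ∈ E)).card ≤ Nat.choose (n-2) (r-2) := by
    intro v hv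
    have hvu : v ≠ u := by
      obtain ⟨e, he, hve⟩ := mem_biUnion.mp hv
      exact fun h => hMu e he (h ▸ hve)
    have key : (H.filter (fun E => u ∈ E ∧ v ∈ E)).card ≤
        (((univ.erase u).erase v).powersetCard (r-2)).card := by
      apply Finset.card_le_card_of_injOn (fun E => (E.erase u).erase v)
      · intro E hE
        simp only [mem_coe, mem_filter] at hE
        obtain ⟨hEH, huE, hvE⟩ := hE
        rw [mem_coe, mem_powersetCard]
        constructor
        · intro x hx
          simp only [mem_erase] at hx ⊢
          exact ⟨hx.1, hx.2.1, mem_univ x⟩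
        · rw [card_erase_of_mem (mem_erase.mpr ⟨hvu, hvE⟩), card_erase_of_mem huE,
            hunif E hEH]
          omega
      · intro E₁ h₁ E₂ h₂ heq
        simp only [coe_filter, Set.mem_setOf_eq] at h₁ h₂
        dsimp only at heq
        have e1 : E₁ = insert u (insert v ((E₁.erase u).erase v)) := by
          ext x
          simp only [mem_insert, mem_erase]
          constructor
          · intro hx
            by_cases hxu : x = u
            · tauto
            · by_cases hxv : x = v <;> tauto
          · rintro (rfl | rfl | h)
            · exact h₁.2.1
            · exact h₁.2.2
            · exact h.2.2
        have e2 : E₂ = insert u (insert v ((E₂.erase u).erase v)) := by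
          ext x
          simp only [mem_insert, mem_erase]
          constructor
          · intro hx
            by_cases hxu : x = u
            · tauto
            · by_cases hxv : x = v <;> tauto
          · rintro (rfl | rfl | h)
            · exact h₂.2.1
            · exact h₂.2.2
            · exact h.2.2
        rw [e1, e2, heq]
    have hcard2 : ((univ.erase u).erase v).card = n - 2 := by
      rw [card_erase_of_mem (mem_erase.mpr ⟨hvu, mem_univ v⟩), card_erase_of_mem (mem_univ u),
        card_univ, hcard]
      omega
    calc _ ≤ _ := key
    _ ≤ Nat.choose (n-2) (r-2) := by
        rw [Finset.card_powersetCard, hcard2]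
  calc (H.filter (fun E => u ∈ E)).card
      ≤ (W.biUnion (fun v => H.filter (fun E => u ∈ E ∧ v ∈ E))).card := card_le_card hsub
    _ ≤ ∑ v ∈ W, (H.filter (fun E => u ∈ E ∧ v ∈ E)).card := card_biUnion_le
    _ ≤ ∑ _v ∈ W, Nat.choose (n-2) (r-2) := Finset.sum_le_sum hdeg
    _ = W.card * Nat.choose (n-2) (r-2) := by rw [Finset.sum_const, smul_eq_mul]
    _ ≤ r * k * Nat.choose (n-2) (r-2) := Nat.mul_le_mul_right _ hWcard
end

section
/- Let H be a stable r-graph on the vertex set [n], let a be an integer with 1 ≤ a < r, let A be an a-element subset of [n], and let i, j be integers with 1 ≤ i < j ≤ n, j ∈ A and i ∉ A. Then deg_H((A∖{j})∪{i}) ≥ deg_H(A). -/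
open Finset

/-- in a stable `r`-graph, shifting an `a`-set does not decrease its degree
(Claim 1 in the proof of Theorem 1.3 (II)). -/
theorem degOf_shift_ge_of_stable {n r a : ℕ}
    (ha : 1 ≤ a) (har : a < r)
    (H : Finset (Finset (Fin n))) (hunif : ∀ E ∈ H, E.card = r)
    (hstable : IsStable H)
    (A : Finset (Fin n)) (hA : A.card = a)
    (i j : Fin n) (hij : i < j) (hjA : j ∈ A) (hiA : i ∉ A) :
    degOf H A ≤ degOf H (insert i (A.erase j)) := by
  have hne : i ≠ j := ne_of_lt hij
  -- stability: shifting an edge stays in H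
  have hsh : ∀ E ∈ H, j ∈ E → i ∉ E → insert i (E.erase j) ∈ H := by
    intro E hE hjE hiE
    by_contra hcon
    have h1 : shiftEdge H i j E = insert i (E.erase j) := by
      simp [shiftEdge, hjE, hiE, hcon]
    have h2 : shiftEdge H i j E ∈ shift H i j :=
      Finset.mem_image_of_mem _ hE
    rw [hstable i j hij, h1] at h2
    exact hcon h2
  unfold degOf
  apply Finset.card_le_card_of_injOn
    (fun E => if i ∈ E then E else insert i (E.erase j))
  · intro E hE
    simp only [Finset.mem_coe, Finset.mem_filter] at hE ⊢
    obtain ⟨hEH, hAE⟩ := hE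
    have hjE : j ∈ E := hAE hjA
    by_cases hiE : i ∈ E
    · simp only [if_pos hiE]
      refine ⟨hEH, ?_⟩
      exact Finset.insert_subset hiE ((Finset.erase_subset_erase j hAE).trans
        (Finset.erase_subset j E))
    · simp only [if_neg hiE]
      refine ⟨hsh E hEH hjE hiE, ?_⟩
      exact Finset.insert_subset (Finset.mem_insert_self _ _)
        ((Finset.erase_subset_erase j hAE).trans (Finset.subset_insert _ _))
  · intro E1 h1 E2 h2 heq
    simp only [Finset.coe_filter, Set.mem_setOf_eq] at h1 h2
    have hj1 : j ∈ E1 := h1.2 hjA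
    have hj2 : j ∈ E2 := h2.2 hjA
    by_cases hi1 : i ∈ E1 <;> by_cases hi2 : i ∈ E2 <;>
      simp only [if_pos, if_neg, hi1, hi2, if_true, if_false] at heq
    · exact heq
    · exfalso
      have : j ∈ insert i (E2.erase j) := heq ▸ hj1
      simp [hne.symm] at this
    · exfalso
      have : j ∈ insert i (E1.erase j) := heq ▸ hj2
      simp [hne.symm] at this
    · have h1' : i ∉ E1.erase j := fun h => hi1 (Finset.mem_of_mem_erase h)
      have h2' : i ∉ E2.erase j := fun h => hi2 (Finset.mem_of_mem_erase h)
      have : E1.erase j = E2.erase j := by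
        have := congrArg (fun S => Finset.erase S i) heq
        simpa [Finset.erase_insert h1', Finset.erase_insert h2'] using this
      calc E1 = insert j (E1.erase j) := (Finset.insert_erase hj1).symm
        _ = insert j (E2.erase j) := by rw [this]
        _ = E2 := Finset.insert_erase hj2
end

section
/- Let n, k, r, a be positive integers with 1 ≤ a < r and n ≥ r(k+1), and let H be an r-graph on the vertex set [n] with matching number ν(H) ≤ k. Define the a-graph H* on [rk+a−1] whose edges are the a-element subsets A of [rk+a−1] with deg_H(A) > rk·C(n−a−1, r−a−1). Then ν(H*) ≤ k. -/
open Finset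

lemma count_through_pair {n r a : ℕ} (H : Finset (Finset (Fin n)))
    (hunif : ∀ E ∈ H, E.card = r) (A : Finset (Fin n)) (hA : A.card = a)
    (v : Fin n) (hv : v ∉ A) :
    (H.filter (fun E => A ⊆ E ∧ v ∈ E)).card ≤ Nat.choose (n - a - 1) (r - a - 1) := by
  classical
  have hcard : ((Finset.univ \ insert v A).powersetCard (r - a - 1)).card
      = Nat.choose (n - a - 1) (r - a - 1) := by
    rw [Finset.card_powersetCard, Finset.card_sdiff_of_subset (Finset.subset_univ _),
      Finset.card_insert_of_notMem hv, Finset.card_univ, Fintype.card_fin, hA,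
      show n - (a + 1) = n - a - 1 from by omega]
  rw [← hcard]
  apply Finset.card_le_card_of_injOn (fun E => E \ insert v A)
  · intro E hE
    simp only [Finset.mem_coe, Finset.mem_filter] at hE
    obtain ⟨hEH, hAE, hvE⟩ := hE
    have hsub : insert v A ⊆ E := Finset.insert_subset hvE hAE
    rw [Finset.mem_coe, Finset.mem_powersetCard]
    constructor
    · intro x hx
      simp only [Finset.mem_sdiff] at hx ⊢
      exact ⟨Finset.mem_univ x, hx.2⟩
    · rw [Finset.card_sdiff_of_subset hsub, hunif E hEH, Finset.card_insert_of_notMem hv, hA]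
      omega
  · intro E1 h1 E2 h2 heq
    simp only [Finset.mem_coe, Finset.mem_filter] at h1 h2
    have hs1 : insert v A ⊆ E1 := Finset.insert_subset h1.2.2 h1.2.1
    have hs2 : insert v A ⊆ E2 := Finset.insert_subset h2.2.2 h2.2.1
    have heq' : E1 \ insert v A = E2 \ insert v A := heq
    rw [← Finset.sdiff_union_of_subset hs1, ← Finset.sdiff_union_of_subset hs2, heq']

lemma exists_good_edge {n r a k : ℕ}
    (H : Finset (Finset (Fin n))) (hunif : ∀ E ∈ H, E.card = r)
    (A : Finset (Fin n)) (hA : A.card = a)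
    (F : Finset (Fin n)) (hFA : Disjoint F A) (hFcard : F.card ≤ r * k)
    (hdeg : r * k * Nat.choose (n - a - 1) (r - a - 1) < degOf H A) :
    ∃ E ∈ H, A ⊆ E ∧ Disjoint E F := by
  classical
  rw [degOf] at hdeg
  set T := H.filter (fun E => A ⊆ E) with hT
  have hbad : (T.filter (fun E => ¬ Disjoint E F)).card
      ≤ r * k * Nat.choose (n - a - 1) (r - a - 1) := by
    have hsub : T.filter (fun E => ¬ Disjoint E F)
        ⊆ F.biUnion (fun v => H.filter (fun E => A ⊆ E ∧ v ∈ E)) := by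
      intro E hE
      simp only [hT, Finset.mem_filter, Finset.not_disjoint_iff] at hE
      obtain ⟨⟨hEH, hAE⟩, v, hvE, hvF⟩ := hE
      exact Finset.mem_biUnion.2 ⟨v, hvF, Finset.mem_filter.2 ⟨hEH, hAE, hvE⟩⟩
    calc (T.filter (fun E => ¬ Disjoint E F)).card
        ≤ (F.biUnion (fun v => H.filter (fun E => A ⊆ E ∧ v ∈ E))).card :=
          Finset.card_le_card hsub
      _ ≤ ∑ v ∈ F, (H.filter (fun E => A ⊆ E ∧ v ∈ E)).card := Finset.card_biUnion_le
      _ ≤ ∑ v ∈ F, Nat.choose (n - a - 1) (r - a - 1) := by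
          refine Finset.sum_le_sum fun v hv => ?_
          exact count_through_pair H hunif A hA v
            (fun hvA => (Finset.disjoint_left.1 hFA hv hvA))
      _ = F.card * Nat.choose (n - a - 1) (r - a - 1) := by
          rw [Finset.sum_const, smul_eq_mul]
      _ ≤ r * k * Nat.choose (n - a - 1) (r - a - 1) :=
          Nat.mul_le_mul_right _ hFcard
  have hsplit := Finset.card_filter_add_card_filter_not
    (s := T) (p := fun E => Disjoint E F)
  have hpos : 0 < (T.filter (fun E => Disjoint E F)).card := by omega
  obtain ⟨E, hE⟩ := Finset.card_pos.1 hpos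
  simp only [hT, Finset.mem_filter] at hE
  exact ⟨E, hE.1.1, hE.1.2, hE.2⟩

lemma greedy_extend {n r a k : ℕ} (ha0 : 0 < a) (har : a < r)
    (H : Finset (Finset (Fin n))) (hunif : ∀ E ∈ H, E.card = r)
    (M : Finset (Finset (Fin n))) (hMcard : M.card ≤ k + 1)
    (hMa : ∀ A ∈ M, A.card = a)
    (hMdeg : ∀ A ∈ M, r * k * Nat.choose (n - a - 1) (r - a - 1) < degOf H A)
    (hMpair : (M : Set (Finset (Fin n))).Pairwise Disjoint) :
    ∀ Q, Q ⊆ M → ∃ g : Finset (Fin n) → Finset (Fin n),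
      (∀ A ∈ Q, g A ∈ H ∧ A ⊆ g A) ∧
      (∀ A ∈ Q, ∀ B ∈ M, A ≠ B → Disjoint (g A) B) ∧
      (∀ A ∈ Q, ∀ B ∈ Q, A ≠ B → Disjoint (g A) (g B)) := by
  classical
  intro Q
  induction Q using Finset.strongInduction with
  | _ Q ih =>
    intro hQM
    rcases Q.eq_empty_or_nonempty with rfl | ⟨A, hAQ⟩
    · exact ⟨id, by simp, by simp, by simp⟩
    have hAM : A ∈ M := hQM hAQ
    obtain ⟨g, hg1, hg2, hg3⟩ := ih (Q.erase A) (Finset.erase_ssubset hAQ)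
      ((Finset.erase_subset _ _).trans hQM)
    set F : Finset (Fin n) :=
      ((Q.erase A).biUnion g) ∪ ((M \ Q).biUnion id) with hF
    have hFA : Disjoint F A := by
      rw [hF, Finset.disjoint_union_left, Finset.disjoint_biUnion_left,
        Finset.disjoint_biUnion_left]
      constructor
      · intro B hB
        exact hg2 B hB A hAM (Finset.ne_of_mem_erase hB)
      · intro B hB
        rw [Finset.mem_sdiff] at hB
        exact hMpair hB.1 hAM (fun h => hB.2 (h ▸ hAQ))
    have hFcard : F.card ≤ r * k := by
      have h1 : ((Q.erase A).biUnion g).card ≤ (Q.card - 1) * r := by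
        calc ((Q.erase A).biUnion g).card ≤ ∑ B ∈ Q.erase A, (g B).card :=
              Finset.card_biUnion_le
          _ ≤ ∑ _B ∈ Q.erase A, r := Finset.sum_le_sum fun B hB =>
              (hunif _ (hg1 B hB).1).le
          _ = (Q.card - 1) * r := by
              rw [Finset.sum_const, smul_eq_mul, Finset.card_erase_of_mem hAQ]
      have h2 : ((M \ Q).biUnion id).card ≤ (M.card - Q.card) * a := by
        calc ((M \ Q).biUnion id).card ≤ ∑ B ∈ M \ Q, B.card :=
              Finset.card_biUnion_le
          _ ≤ ∑ _B ∈ M \ Q, a := Finset.sum_le_sum fun B hB =>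
              (hMa B (Finset.mem_sdiff.1 hB).1).le
          _ = (M.card - Q.card) * a := by
              rw [Finset.sum_const, smul_eq_mul, Finset.card_sdiff_of_subset hQM]
      have hq1 : 1 ≤ Q.card := Finset.card_pos.2 ⟨A, hAQ⟩
      have hqM : Q.card ≤ M.card := Finset.card_le_card hQM
      calc F.card ≤ ((Q.erase A).biUnion g).card + ((M \ Q).biUnion id).card :=
            Finset.card_union_le _ _
        _ ≤ (Q.card - 1) * r + (M.card - Q.card) * a := Nat.add_le_add h1 h2
        _ ≤ (Q.card - 1) * r + (M.card - Q.card) * r :=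
            Nat.add_le_add_left (Nat.mul_le_mul_left _ har.le) _
        _ = ((Q.card - 1) + (M.card - Q.card)) * r := (Nat.add_mul _ _ _).symm
        _ ≤ k * r := Nat.mul_le_mul_right _ (by omega)
        _ = r * k := Nat.mul_comm _ _
    obtain ⟨E, hEH, hAE, hEF⟩ := exists_good_edge H hunif A (hMa A hAM) F hFA
      hFcard (hMdeg A hAM)
    refine ⟨Function.update g A E, ?_, ?_, ?_⟩
    · intro B hB
      rcases eq_or_ne B A with rfl | hBA
      · simp [Function.update_self, hEH, hAE]
      · rw [Function.update_of_ne hBA]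
        exact hg1 B (Finset.mem_erase.2 ⟨hBA, hB⟩)
    · intro A' hA' B hBM hAB
      rcases eq_or_ne A' A with rfl | hA'A
      · rw [Function.update_self]
        refine hEF.mono_right ?_
        rcases em (B ∈ Q) with hBQ | hBQ
        · have hBe : B ∈ Q.erase A' := Finset.mem_erase.2 ⟨fun h => hAB h.symm, hBQ⟩
          exact ((hg1 B hBe).2.trans (Finset.subset_biUnion_of_mem g hBe)).trans
            Finset.subset_union_left
        · exact (Finset.subset_biUnion_of_mem id
            (Finset.mem_sdiff.2 ⟨hBM, hBQ⟩)).trans Finset.subset_union_right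
      · rw [Function.update_of_ne hA'A]
        exact hg2 A' (Finset.mem_erase.2 ⟨hA'A, hA'⟩) B hBM hAB
    · intro A1 h1 A2 h2 h12
      rcases eq_or_ne A1 A with rfl | hA1
      · rw [Function.update_self, Function.update_of_ne (Ne.symm h12)]
        refine hEF.mono_right ?_
        exact (Finset.subset_biUnion_of_mem g
          (Finset.mem_erase.2 ⟨Ne.symm h12, h2⟩)).trans Finset.subset_union_left
      · rcases eq_or_ne A2 A with rfl | hA2
        · rw [Function.update_self, Function.update_of_ne hA1]
          refine (hEF.mono_right ?_).symm
          exact (Finset.subset_biUnion_of_mem g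
            (Finset.mem_erase.2 ⟨hA1, h1⟩)).trans Finset.subset_union_left
        · rw [Function.update_of_ne hA1, Function.update_of_ne hA2]
          exact hg3 A1 (Finset.mem_erase.2 ⟨hA1, h1⟩) A2
            (Finset.mem_erase.2 ⟨hA2, h2⟩) h12


theorem helper_matchingLE_highDegree_sets {n k r a : ℕ}
    (hn0 : 0 < n) (hk0 : 0 < k) (hr0 : 0 < r) (ha0 : 0 < a)
    (har : a < r) (hn : r * (k + 1) ≤ n)
    (H : Finset (Finset (Fin n))) (hunif : ∀ E ∈ H, E.card = r)
    (hmatch : ∀ M ⊆ H, (M : Set (Finset (Fin n))).Pairwise Disjoint → M.card ≤ k) :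
    ∀ M ⊆ ((Finset.univ.powersetCard a).filter
        (fun A : Finset (Fin n) =>
          (∀ x ∈ A, (x : ℕ) < r * k + a - 1) ∧
          r * k * Nat.choose (n - a - 1) (r - a - 1) < degOf H A)),
      (M : Set (Finset (Fin n))).Pairwise Disjoint → M.card ≤ k := by
  classical
  intro M hM hpair
  by_contra hcard
  push_neg at hcard
  obtain ⟨M', hM'M, hM'card⟩ := Finset.exists_subset_card_eq
    (show k + 1 ≤ M.card by omega)
  have hMem : ∀ A ∈ M', A.card = a ∧
      r * k * Nat.choose (n - a - 1) (r - a - 1) < degOf H A := by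
    intro A hA
    have := hM (hM'M hA)
    rw [Finset.mem_filter, Finset.mem_powersetCard_univ] at this
    exact ⟨this.1, this.2.2⟩
  have hpair' : (M' : Set (Finset (Fin n))).Pairwise Disjoint :=
    hpair.mono (Finset.coe_subset.2 hM'M)
  obtain ⟨g, hg1, hg2, hg3⟩ := greedy_extend ha0 har H hunif M' (le_of_eq hM'card)
    (fun A hA => (hMem A hA).1) (fun A hA => (hMem A hA).2) hpair' M' Finset.Subset.rfl
  have hinj : Set.InjOn g M' := by
    intro A hA B hB hgAB
    by_contra hne
    have hd := hg3 A hA B hB hne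
    rw [hgAB] at hd
    have hBempty : g B = ∅ := by
      simpa using disjoint_self.1 hd
    have hBg := (hg1 B hB).2
    rw [hBempty, Finset.subset_empty] at hBg
    have hBa := (hMem B hB).1
    rw [hBg, Finset.card_empty] at hBa
    omega
  have hsub : M'.image g ⊆ H := by
    intro E hE
    obtain ⟨A, hA, rfl⟩ := Finset.mem_image.1 hE
    exact (hg1 A hA).1
  have hdisj : ((M'.image g : Finset (Finset (Fin n))) :
      Set (Finset (Fin n))).Pairwise Disjoint := by
    intro E1 h1 E2 h2 hne
    simp only [Finset.coe_image, Set.mem_image, Finset.mem_coe] at h1 h2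
    obtain ⟨A1, hA1, rfl⟩ := h1
    obtain ⟨A2, hA2, rfl⟩ := h2
    exact hg3 A1 hA1 A2 hA2 (fun h => hne (by rw [h]))
  have hfin := hmatch (M'.image g) hsub hdisj
  rw [Finset.card_image_of_injOn hinj, hM'card] at hfin
  omega

/-- Claim 2 in the proof of Theorem 1.3 (II): the `a`-graph of
high-degree `a`-sets inside `[rk+a-1]` has matching number at most `k`. -/
theorem matchingLE_highDegree_sets {n k r a : ℕ}
    (hn0 : 0 < n) (hk0 : 0 < k) (hr0 : 0 < r) (ha0 : 0 < a)
    (har : a < r) (hn : r * (k + 1) ≤ n)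
    (H : Finset (Finset (Fin n))) (hunif : ∀ E ∈ H, E.card = r)
    (hmatch : matchingLE H k) :
    matchingLE
      ((Finset.univ.powersetCard a).filter
        (fun A : Finset (Fin n) =>
          (∀ x ∈ A, (x : ℕ) < r * k + a - 1) ∧
          r * k * Nat.choose (n - a - 1) (r - a - 1) < degOf H A)) k := by
  exact helper_matchingLE_highDegree_sets hn0 hk0 hr0 ha0 har hn H hunif hmatch
end

section
/- For all positive integers n, k, r, s, a with a ≤ r ≤ s ≤ n and ak+a−1 ≤ n, the number of s-cliques of F^{(r)}_{n,k,a} is K_s^r(F^{(r)}_{n,k,a}) = Σ_{i=s−r+a}^{s} C(ak+a−1, i)·C(n−ak−a+1, s−i); equivalently, an s-element subset S of [n] is an s-clique of F^{(r)}_{n,k,a} if and only if |S ∩ [ak+a−1]| ≥ s−r+a. -/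
open Finset

lemma card_filter_lt_fin (n m : ℕ) (h : m ≤ n) :
    (Finset.univ.filter (fun x : Fin n => (x:ℕ) < m)).card = m := by
  have : (Finset.univ.filter (fun x : Fin n => (x:ℕ) < m))
      = Finset.attachFin (Finset.range m) (fun x hx => lt_of_lt_of_le (Finset.mem_range.mp hx) h) := by
    ext x; simp [Finset.mem_attachFin]
  rw [this, Finset.card_attachFin, Finset.card_range]

lemma fiber_card {n : ℕ} (L : Finset (Fin n)) (s i : ℕ) (hi : i ≤ s) :
    ((Finset.univ.powersetCard s).filter (fun S => (S ∩ L).card = i)).card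
      = L.card.choose i * (Lᶜ).card.choose (s - i) := by
  rw [← Finset.card_powersetCard, ← Finset.card_powersetCard, ← Finset.card_product]
  apply Finset.card_bij' (fun S _ => (S ∩ L, S \ L)) (fun P _ => P.1 ∪ P.2)
  · intro S hS
    simp only [Finset.mem_filter, Finset.mem_powersetCard_univ] at hS
    obtain ⟨hcard, hint⟩ := hS
    have hsum : (S ∩ L).card + (S \ L).card = S.card := Finset.card_inter_add_card_sdiff S L
    simp only [Finset.mem_product, Finset.mem_powersetCard]
    refine ⟨⟨Finset.inter_subset_right, hint⟩, ?_, ?_⟩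
    · intro x hx
      simp only [Finset.mem_sdiff] at hx
      simp [hx.2]
    · omega
  · intro P hP
    simp only [Finset.mem_product, Finset.mem_powersetCard] at hP
    obtain ⟨⟨hP1, hP1c⟩, hP2, hP2c⟩ := hP
    have hdisj : Disjoint P.1 P.2 := by
      rw [Finset.disjoint_left]
      intro x hx1 hx2
      exact (Finset.mem_compl.mp (hP2 hx2)) (hP1 hx1)
    have huni : (P.1 ∪ P.2) ∩ L = P.1 := by
      ext x
      simp only [Finset.mem_inter, Finset.mem_union]
      constructor
      · rintro ⟨h1 | h2, hL⟩
        · exact h1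
        · exact absurd hL (Finset.mem_compl.mp (hP2 h2))
      · intro h; exact ⟨Or.inl h, hP1 h⟩
    simp only [Finset.mem_filter, Finset.mem_powersetCard_univ]
    rw [Finset.card_union_of_disjoint hdisj, huni]
    omega
  · intro S hS
    ext x
    simp only [Finset.mem_union, Finset.mem_inter, Finset.mem_sdiff]
    tauto
  · intro P hP
    simp only [Finset.mem_product, Finset.mem_powersetCard] at hP
    obtain ⟨⟨hP1, hP1c⟩, hP2, hP2c⟩ := hP
    have h1 : (P.1 ∪ P.2) ∩ L = P.1 := by
      ext x
      simp only [Finset.mem_inter, Finset.mem_union]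
      constructor
      · rintro ⟨h1 | h2, hL⟩
        · exact h1
        · exact absurd hL (Finset.mem_compl.mp (hP2 h2))
      · intro h; exact ⟨Or.inl h, hP1 h⟩
    have h2 : (P.1 ∪ P.2) \ L = P.2 := by
      ext x
      simp only [Finset.mem_sdiff, Finset.mem_union]
      constructor
      · rintro ⟨h1 | h2, hL⟩
        · exact absurd (hP1 h1) hL
        · exact h2
      · intro h; exact ⟨Or.inr h, Finset.mem_compl.mp (hP2 h)⟩
    simp [h1, h2]

lemma count_main {n : ℕ} (L : Finset (Fin n)) (s c : ℕ) (hcs : c ≤ s) :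
    ((Finset.univ.powersetCard s).filter (fun S => c ≤ (S ∩ L).card)).card
      = ∑ i ∈ Finset.Icc c s, L.card.choose i * (Lᶜ).card.choose (s - i) := by
  rw [Finset.card_eq_sum_card_fiberwise (f := fun S => (S ∩ L).card)
      (t := Finset.Icc c s) ?memt]
  case memt =>
    intro S hS
    simp only [Finset.mem_coe, Finset.mem_filter, Finset.mem_powersetCard_univ] at hS
    have : (S ∩ L).card ≤ s := hS.1 ▸ Finset.card_le_card Finset.inter_subset_left
    simp only [Finset.mem_coe, Finset.mem_Icc]
    exact ⟨hS.2, this⟩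
  refine Finset.sum_congr rfl fun i hi => ?_
  simp only [Finset.mem_Icc] at hi
  rw [Finset.filter_filter]
  rw [Finset.filter_congr (q := fun S => (S ∩ L).card = i)
      (fun S _ => by constructor <;> (intros; omega))]
  exact fiber_card L s i hi.2


lemma clique_iff {n k r s a : ℕ} (ha0 : 0 < a) (har : a ≤ r) (hrs : r ≤ s)
    (S : Finset (Fin n)) (hS : S.card = s) :
    S.powersetCard r ⊆ Fnka n k r a ↔
      s - r + a ≤ (S.filter (fun x : Fin n => (x : ℕ) < a * k + a - 1)).card := by
  set p : Fin n → Prop := fun x => (x : ℕ) < a * k + a - 1 with hp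
  have htu : (S.filter p).card + (S.filter (fun x => ¬ p x)).card = s := by
    rw [← hS]; exact Finset.card_filter_add_card_filter_not _
  set t := (S.filter p).card
  set u := (S.filter (fun x => ¬ p x)).card
  constructor
  · intro hsub
    by_contra hlt
    push_neg at hlt
    by_cases hru : r ≤ u
    · obtain ⟨E, hE, hEcard⟩ := Finset.exists_subset_card_eq hru
      have hES : E ⊆ S := hE.trans (Finset.filter_subset _ _)
      have hmem : E ∈ S.powersetCard r := Finset.mem_powersetCard.mpr ⟨hES, hEcard⟩
      have := hsub hmem
      simp only [Fnka, Finset.mem_filter] at this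
      have hempty : E.filter p = ∅ :=
        Finset.filter_false_of_mem (fun x hx => (Finset.mem_filter.mp (hE hx)).2)
      rw [hempty] at this
      simp at this
      omega
    · push_neg at hru
      have hrt : r - u ≤ t := by omega
      obtain ⟨F, hF, hFcard⟩ := Finset.exists_subset_card_eq hrt
      have hdisj : Disjoint F (S.filter (fun x => ¬ p x)) := by
        rw [Finset.disjoint_left]
        intro x hxF hxU
        exact (Finset.mem_filter.mp hxU).2 (Finset.mem_filter.mp (hF hxF)).2
      set E := F ∪ S.filter (fun x => ¬ p x) with hE
      have hEcard : E.card = r := by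
        rw [hE, Finset.card_union_of_disjoint hdisj, hFcard]; omega
      have hES : E ⊆ S :=
        Finset.union_subset (hF.trans (Finset.filter_subset _ _)) (Finset.filter_subset _ _)
      have hmem : E ∈ S.powersetCard r := Finset.mem_powersetCard.mpr ⟨hES, hEcard⟩
      have := hsub hmem
      simp only [Fnka, Finset.mem_filter] at this
      have hEp : E.filter p = F := by
        rw [hE, Finset.filter_union,
          Finset.filter_eq_self.mpr (fun x hx => (Finset.mem_filter.mp (hF hx)).2),
          Finset.filter_false_of_mem (fun x hx => (Finset.mem_filter.mp hx).2),
          Finset.union_empty]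
      rw [hEp, hFcard] at this
      omega
  · intro h E hE
    obtain ⟨hES, hEcard⟩ := Finset.mem_powersetCard.mp hE
    have h1 : (E.filter p).card + (E.filter (fun x => ¬ p x)).card = r := by
      rw [← hEcard]; exact Finset.card_filter_add_card_filter_not _
    have h2 : (E.filter (fun x => ¬ p x)).card ≤ u :=
      Finset.card_le_card (Finset.filter_subset_filter _ hES)
    simp only [Fnka, Finset.mem_filter, Finset.mem_powersetCard_univ]
    refine ⟨hEcard, ?_⟩
    show a ≤ (E.filter p).card
    omega

/-- the clique count of `F^{(r)}_{n,k,a}`, together with the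
characterization of its `s`-cliques. -/
theorem cliqueCount_Fnka_formula {n k r s a : ℕ}
    (hn0 : 0 < n) (hk0 : 0 < k) (hr0 : 0 < r) (hs0 : 0 < s) (ha0 : 0 < a)
    (har : a ≤ r) (hrs : r ≤ s) (hsn : s ≤ n) (hak : a * k + a - 1 ≤ n) :
    cliqueCount r s (Fnka n k r a)
        = ∑ i ∈ Finset.Icc (s - r + a) s,
            Nat.choose (a * k + a - 1) i * Nat.choose (n - (a * k + a - 1)) (s - i) ∧
      ∀ S : Finset (Fin n), S.card = s →
        (S.powersetCard r ⊆ Fnka n k r a ↔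
          s - r + a ≤ (S.filter (fun x : Fin n => (x : ℕ) < a * k + a - 1)).card) := by
  set m := a * k + a - 1 with hm
  set p : Fin n → Prop := fun x => (x : ℕ) < m with hp
  set L : Finset (Fin n) := Finset.univ.filter p with hL
  have hinter : ∀ S : Finset (Fin n), S.filter p = S ∩ L := by
    intro S; ext x; simp [hL, Finset.mem_inter]
  have hiff : ∀ S : Finset (Fin n), S.card = s →
      (S.powersetCard r ⊆ Fnka n k r a ↔
        s - r + a ≤ (S.filter (fun x : Fin n => (x : ℕ) < m)).card) :=
    fun S hS => clique_iff ha0 har hrs S hS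
  refine ⟨?_, hiff⟩
  have hLcard : L.card = m := card_filter_lt_fin n m hak
  have hLcc : (Lᶜ).card = n - m := by
    rw [Finset.card_compl, hLcard, Fintype.card_fin]
  rw [← hLcc, ← hLcard]
  rw [← count_main L s (s - r + a) (by omega)]
  unfold cliqueCount
  congr 1
  apply Finset.filter_congr
  intro S hS
  rw [Finset.mem_powersetCard_univ] at hS
  rw [hiff S hS, ← hinter S]
end
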